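/- arXiv:0802.1982 — 7 statements merged into one kernel-verified Lean document; each statement's English description precedes it below -/
import Mathlib

section
/- Let A be an n×n matrix over ℤ/2 all of whose proper principal minors are 1. If det A = 1, then A is conjugate by a permutation matrix to an upper triangular matrix with all diagonal entries equal to 1. -/
open Matrix

/-- The principal minor of `A` indexed by the subset `s` (rows and columns). -/
def pminor {m : Type*} [Fintype m] [DecidableEq m] {R : Type*} [CommRing R]
    (A : Matrix m m R) (s : Finset m) : R :=
  (A.submatrix (fun i : s => (i : m)) (fun j : s => (j : m))).det

lemma core_cycle {n : ℕ} (A : Matrix (Fin n) (Fin n) (ZMod 2))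
    (hdiag : ∀ i, A i i = 1) (f : Fin n → Fin n)
    (hA : ∀ y, A (f y) y = 1) (x : Fin n) (m : ℕ) (hm : 0 < m)
    (hfix : f^[m] x = x) (hfx : f x ≠ x) :
    ∃ ρ : Equiv.Perm (Fin n), ρ ≠ 1 ∧ (∀ y, A (ρ y) y = 1) ∧ ρ.support.card ≤ m := by
  have hex : ∃ k, 0 < k ∧ f^[k] x = x := ⟨m, hm, hfix⟩
  set m₀ := Nat.find hex with hm₀def
  obtain ⟨hm₀pos, hm₀fix⟩ := Nat.find_spec hex
  have hminim : ∀ k, 0 < k → f^[k] x = x → m₀ ≤ k := fun k h1 h2 => Nat.find_le ⟨h1, h2⟩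
  have hm₀m : m₀ ≤ m := hminim m hm hfix
  set l : List (Fin n) := (List.range m₀).map (fun k => f^[k] x) with hldef
  have hlen : l.length = m₀ := by simp [hldef]
  have hget : ∀ k (hk : k < m₀), l[k]'(by omega) = f^[k] x := by
    intro k hk; simp [hldef]
  -- injectivity on range
  have hinj : ∀ p q, p < m₀ → q < m₀ → f^[p] x = f^[q] x → p = q := by
    have key : ∀ p q, p < q → q < m₀ → f^[p] x = f^[q] x → False := by
      intro p q hpq hq heq
      have h1 : f^[m₀ - q + p] x = x := by
        have : f^[m₀ - q] (f^[q] x) = x := by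
          rw [← Function.iterate_add_apply]
          rw [Nat.sub_add_cancel (le_of_lt hq)]
          exact hm₀fix
        rw [← heq] at this
        rwa [← Function.iterate_add_apply] at this
      have hpos : 0 < m₀ - q + p := by
        rcases Nat.eq_zero_or_pos p with rfl | hp
        · omega
        · omega
      have := hminim _ hpos h1
      omega
    intro p q hp hq heq
    rcases lt_trichotomy p q with h | h | h
    · exact absurd heq (fun he => key p q h hq he)
    · exact h
    · exact absurd heq.symm (fun he => key q p h hp he)
  have hnodup : l.Nodup := by
    rw [hldef]
    refine List.Nodup.map_on ?_ (List.nodup_range)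
    intro p hp q hq heq
    exact hinj p q (List.mem_range.mp hp) (List.mem_range.mp hq) heq
  have hxmem : x ∈ l := by
    have : l[0]'(by omega) = f^[0] x := hget 0 hm₀pos
    simp at this
    rw [← this]
    exact List.getElem_mem _
  -- formPerm maps members to f
  have hfp : ∀ y ∈ l, l.formPerm y = f y := by
    intro y hy
    obtain ⟨k, hk, rfl⟩ := List.getElem_of_mem hy
    rw [List.formPerm_apply_getElem _ hnodup k hk]
    have hk' : k < m₀ := hlen ▸ hk
    have e1 : l[(k+1) % l.length]'(Nat.mod_lt _ (hk.trans_le le_rfl |> fun _ => by omega)) = f^[(k+1) % m₀] x := by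
      have h2 : (k+1) % m₀ < m₀ := Nat.mod_lt _ hm₀pos
      have := hget ((k+1) % m₀) h2
      convert this using 2
      rw [hlen]
    rw [e1, hget k hk']
    rw [show f (f^[k] x) = f^[k+1] x from (Function.iterate_succ_apply' f k x).symm]
    rcases Nat.lt_or_ge (k+1) m₀ with h | h
    · rw [Nat.mod_eq_of_lt h]
    · have hk1 : k + 1 = m₀ := by omega
      rw [hk1, Nat.mod_self]
      simp only [Function.iterate_zero, id]
      exact hm₀fix.symm
  refine ⟨l.formPerm, ?_, ?_, ?_⟩
  · intro h
    have : l.formPerm x = f x := hfp x hxmem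
    rw [h] at this
    simp at this
    exact hfx this.symm
  · intro y
    by_cases hy : y ∈ l
    · rw [hfp y hy]; exact hA y
    · rw [List.formPerm_apply_of_notMem hy]; exact hdiag y
  · calc l.formPerm.support.card ≤ l.toFinset.card := by
          apply Finset.card_le_card
          exact List.support_formPerm_le l
        _ ≤ l.length := l.toFinset_card_le
        _ ≤ m := by rw [hlen]; exact hm₀m

lemma pminor_count {n : ℕ} (A : Matrix (Fin n) (Fin n) (ZMod 2))
    (hdiag : ∀ i, A i i = 1) (s : Finset (Fin n)) :
    pminor A s = ((Finset.univ.filter (fun τ : Equiv.Perm (Fin n) =>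
      (∀ a, a ∉ s → τ a = a) ∧ ∀ i, A (τ i) i = 1)).card : ZMod 2) := by
  classical
  rw [pminor, Matrix.det_apply]
  simp only [Matrix.submatrix_apply]
  have step1 : ∀ σ : Equiv.Perm {x // x ∈ s},
      (Equiv.Perm.sign σ) • (∏ i : {x // x ∈ s}, A (σ i : Fin n) (i : Fin n))
        = if (∀ i : {x // x ∈ s}, A (σ i : Fin n) (i : Fin n) = 1) then (1 : ZMod 2) else 0 := by
    intro σ
    have hsmul : (Equiv.Perm.sign σ) • (∏ i : {x // x ∈ s}, A (σ i : Fin n) (i : Fin n))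
        = ∏ i : {x // x ∈ s}, A (σ i : Fin n) (i : Fin n) := by
      rcases Int.units_eq_one_or (Equiv.Perm.sign σ) with h | h <;> rw [h]
      · simp
      · simp only [Units.neg_smul, one_smul]
        exact (CharTwo.neg_eq _)
    rw [hsmul]
    by_cases hc : ∀ i : {x // x ∈ s}, A (σ i : Fin n) (i : Fin n) = 1
    · rw [if_pos hc, Finset.prod_eq_one (fun i _ => hc i)]
    · rw [if_neg hc]
      push_neg at hc
      obtain ⟨i, hi⟩ := hc
      have h0 : A (σ i : Fin n) (i : Fin n) = 0 := by
        rcases (by decide : ∀ x : ZMod 2, x = 0 ∨ x = 1) (A (σ i : Fin n) (i : Fin n)) with h | h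
        · exact h
        · exact absurd h hi
      exact Finset.prod_eq_zero (Finset.mem_univ i) h0
  rw [Finset.sum_congr rfl (fun σ _ => step1 σ), Finset.sum_boole]
  congr 1
  refine Finset.card_bij (fun σ _ => Equiv.Perm.ofSubtype σ) ?_ ?_ ?_
  · intro σ hσ
    rw [Finset.mem_filter] at hσ ⊢
    obtain ⟨-, hσ⟩ := hσ
    refine ⟨Finset.mem_univ _, fun a ha => Equiv.Perm.ofSubtype_apply_of_not_mem σ ha, ?_⟩
    intro i
    by_cases hi : i ∈ s
    · rw [Equiv.Perm.ofSubtype_apply_of_mem σ hi]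
      exact hσ ⟨i, hi⟩
    · rw [Equiv.Perm.ofSubtype_apply_of_not_mem σ hi]
      exact hdiag i
  · intro σ hσ σ' hσ' heq
    refine Equiv.ext fun i => ?_
    have h := congrArg (fun τ : Equiv.Perm (Fin n) => τ (i : Fin n)) heq
    rw [Equiv.Perm.ofSubtype_apply_of_mem σ i.2, Equiv.Perm.ofSubtype_apply_of_mem σ' i.2] at h
    exact Subtype.ext h
  · intro τ hτ
    rw [Finset.mem_filter] at hτ
    obtain ⟨-, h1, h2⟩ := hτ
    set e := Equiv.Perm.subtypeEquivSubtypePerm (fun x => x ∈ s)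
    set σ := e.symm ⟨τ, h1⟩ with hσdef
    have hback : Equiv.Perm.ofSubtype σ = τ := by
      have := e.apply_symm_apply ⟨τ, h1⟩
      exact congrArg Subtype.val this
    have happly : ∀ i : {x // x ∈ s}, (σ i : Fin n) = τ (i : Fin n) := by
      intro i
      rfl
    refine ⟨σ, ?_, hback⟩
    rw [Finset.mem_filter]
    refine ⟨Finset.mem_univ _, fun i => ?_⟩
    rw [happly i]
    exact h2 i

lemma no_cycle {n : ℕ} (A : Matrix (Fin n) (Fin n) (ZMod 2))
    (hdiag : ∀ i, A i i = 1) (hall : ∀ s, pminor A s = 1) :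
    ∀ σ : Equiv.Perm (Fin n), (∀ i, A (σ i) i = 1) → σ = 1 := by
  classical
  by_contra hcon
  push_neg at hcon
  set T : Finset (Equiv.Perm (Fin n)) :=
    Finset.univ.filter (fun σ => σ ≠ 1 ∧ ∀ i, A (σ i) i = 1) with hTdef
  have hTne : T.Nonempty := by
    obtain ⟨σ, h1, h2⟩ := hcon
    exact ⟨σ, by simp [hTdef, h1, h2]⟩
  obtain ⟨σ, hσT, hσmin⟩ := T.exists_min_image (fun σ => σ.support.card) hTne
  rw [hTdef, Finset.mem_filter] at hσT
  obtain ⟨-, hσ1, hσc⟩ := hσT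
  -- pick a point in the support
  obtain ⟨i, hi⟩ := Finset.nonempty_of_ne_empty
    (fun h => hσ1 (Equiv.Perm.support_eq_empty_iff.mp h))
  have hσi : σ i ≠ i := Equiv.Perm.mem_support.mp hi
  -- pass to the cycle of i
  set c := σ.cycleOf i with hcdef
  have hccompat : ∀ j, A (c j) j = 1 := by
    intro j
    rw [hcdef, Equiv.Perm.cycleOf_apply]
    split
    · exact hσc j
    · exact hdiag j
  have hc1 : c ≠ 1 := by
    intro h
    have : c i = σ i := Equiv.Perm.cycleOf_apply_self σ i
    rw [h] at this
    exact hσi (by simpa using this.symm)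
  have hcT : c ∈ T := by simp [hTdef, hc1, hccompat]
  have hsub : c.support ⊆ σ.support := Equiv.Perm.support_cycleOf_le σ i
  have hsupeq : c.support = σ.support :=
    Finset.eq_of_subset_of_card_le hsub (hσmin c hcT)
  have hcyc : c.IsCycle := Equiv.Perm.isCycle_cycleOf σ hσi
  set s := c.support with hsdef
  have hmin : ∀ τ ∈ T, s.card ≤ τ.support.card := by
    intro τ hτ
    rw [hsupeq]
    exact hσmin τ hτ
  -- counting
  have hcount := pminor_count A hdiag s
  rw [hall s] at hcount
  set F : Finset (Equiv.Perm (Fin n)) :=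
    Finset.univ.filter (fun τ : Equiv.Perm (Fin n) =>
      (∀ a, a ∉ s → τ a = a) ∧ ∀ i, A (τ i) i = 1) with hFdef
  have h1F : (1 : Equiv.Perm (Fin n)) ∈ F := by simp [hFdef, hdiag]
  have hcF : c ∈ F := by
    rw [hFdef, Finset.mem_filter]
    refine ⟨Finset.mem_univ _, fun a ha => ?_, hccompat⟩
    · by_contra h
      exact ha (Equiv.Perm.mem_support.mpr h)
  -- there is a third element
  have hthird : ∃ τ ∈ F, τ ≠ 1 ∧ τ ≠ c := by
    by_contra h
    push_neg at h
    have hFeq : F = {1, c} := by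
      apply Finset.Subset.antisymm
      · intro τ hτ
        rcases eq_or_ne τ 1 with rfl | h1
        · simp
        rcases eq_or_ne τ c with rfl | h2
        · simp
        exact absurd (h τ hτ h1) (by simp [h2])
      · intro τ hτ
        rcases Finset.mem_insert.mp hτ with rfl | hτ
        · exact h1F
        · rw [Finset.mem_singleton] at hτ; subst hτ; exact hcF
    rw [hFeq] at hcount
    rw [Finset.card_insert_of_notMem (by simpa using hc1.symm), Finset.card_singleton] at hcount
    exact absurd hcount.symm (by decide)
  obtain ⟨τ, hτF, hτ1, hτc⟩ := hthird
  rw [hFdef, Finset.mem_filter] at hτF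
  obtain ⟨-, hτfix, hτcompat⟩ := hτF
  have hτT : τ ∈ T := by simp [hTdef, hτ1, hτcompat]
  have hτsub : τ.support ⊆ s := by
    intro a ha
    by_contra h
    exact Equiv.Perm.mem_support.mp ha (hτfix a h)
  have hτsup : τ.support = s := Finset.eq_of_subset_of_card_le hτsub (hmin τ hτT)
  -- find a disagreement point
  have hdis : ∃ i₀, τ i₀ ≠ c i₀ := by
    by_contra h
    push_neg at h
    exact hτc (Equiv.ext h)
  obtain ⟨i₀, hi₀⟩ := hdis
  have hi₀s : i₀ ∈ s := by
    by_contra h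
    have h1 : τ i₀ = i₀ := hτfix i₀ h
    have h2 : c i₀ = i₀ := by
      by_contra h2
      exact h (Equiv.Perm.mem_support.mpr h2)
    rw [h1, h2] at hi₀
    exact hi₀ rfl
  have hτi₀ : τ i₀ ≠ i₀ := Equiv.Perm.mem_support.mp (hτsup ▸ hi₀s)
  have hci₀ : c i₀ ≠ i₀ := Equiv.Perm.mem_support.mp hi₀s
  have hτi₀s : τ i₀ ∈ s := hτsup ▸ (Equiv.Perm.apply_mem_support.mpr (hτsup ▸ hi₀s))
  -- same cycle
  have hsc : c.SameCycle (τ i₀) i₀ :=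
    hcyc.sameCycle (Equiv.Perm.mem_support.mp hτi₀s) hci₀
  obtain ⟨k, hk, hkeq⟩ := hsc.exists_pow_eq'
  have hkord : orderOf c = s.card := hcyc.orderOf
  -- minimal such k
  have hexk : ∃ j, 0 < j ∧ (c ^ j) (τ i₀) = i₀ := by
    refine ⟨k, ?_, hkeq⟩
    rcases Nat.eq_zero_or_pos k with rfl | h
    · simp at hkeq; exact absurd hkeq hτi₀
    · exact h
  set k₀ := Nat.find hexk with hk₀def
  obtain ⟨hk₀pos, hk₀eq⟩ := Nat.find_spec hexk
  have hk₀min : ∀ j, 0 < j → (c ^ j) (τ i₀) = i₀ → k₀ ≤ j := fun j h1 h2 => Nat.find_le ⟨h1, h2⟩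
  have hk₀k : k₀ ≤ k := by
    apply hk₀min
    · rcases Nat.eq_zero_or_pos k with rfl | h
      · simp at hkeq; exact absurd hkeq hτi₀
      · exact h
    · exact hkeq
  have hk₀lt : k₀ < s.card := by
    rw [← hkord]; exact lt_of_le_of_lt hk₀k hk
  -- construct f
  set f : Fin n → Fin n := fun y => if y = i₀ then τ i₀ else c y with hfdef
  have hAf : ∀ y, A (f y) y = 1 := by
    intro y
    rw [hfdef]
    dsimp only
    split
    · rename_i h; rw [h]; exact hτcompat i₀
    · exact hccompat y
  have hiter : ∀ j, j ≤ k₀ → f^[j+1] i₀ = (c ^ j) (τ i₀) := by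
    intro j
    induction j with
    | zero => intro _; simp [hfdef]
    | succ j ih =>
      intro hj
      rw [Function.iterate_succ_apply', ih (by omega)]
      have hne : (c ^ j) (τ i₀) ≠ i₀ := by
        intro h
        rcases Nat.eq_zero_or_pos j with rfl | hjpos
        · simp at h; exact hτi₀ h
        · exact absurd (hk₀min j hjpos h) (by omega)
      rw [hfdef]
      dsimp only
      rw [if_neg hne]
      rw [pow_succ' c j, Equiv.Perm.mul_apply]
  have hfix : f^[k₀+1] i₀ = i₀ := by rw [hiter k₀ le_rfl]; exact hk₀eq
  have hfi₀ : f i₀ ≠ i₀ := by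
    rw [hfdef]; dsimp only; rw [if_pos rfl]; exact hτi₀
  obtain ⟨ρ, hρ1, hρc, hρcard⟩ := core_cycle A hdiag f hAf i₀ (k₀+1) (by omega) hfix hfi₀
  have hρT : ρ ∈ T := by simp [hTdef, hρ1, hρc]
  have hge : s.card ≤ k₀ + 1 := le_trans (hmin ρ hρT) hρcard
  have heq : k₀ + 1 = s.card := by omega
  -- contradiction: τ i₀ = c i₀
  have hord : c ^ (k₀ + 1) = 1 := by
    rw [heq, ← hkord]; exact pow_orderOf_eq_one c
  have : τ i₀ = c i₀ := by
    have h1 : (c ^ (k₀ + 1)) (τ i₀) = τ i₀ := by rw [hord]; simp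
    rw [pow_succ' c k₀] at h1
    rw [Equiv.Perm.mul_apply, hk₀eq] at h1
    exact h1.symm
  exact hi₀ this

lemma pminor_univ {n : ℕ} (A : Matrix (Fin n) (Fin n) (ZMod 2)) :
    pminor A Finset.univ = A.det := by
  rw [pminor]
  have h := Matrix.det_submatrix_equiv_self (Equiv.subtypeUnivEquiv (fun x => Finset.mem_univ (α := Fin n) x)) A
  convert h using 2
  rfl

lemma pminor_singleton {n : ℕ} (A : Matrix (Fin n) (Fin n) (ZMod 2)) (i : Fin n) :
    pminor A {i} = A i i := by
  letI : Unique {x // x ∈ ({i} : Finset (Fin n))} :=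
    ⟨⟨⟨i, Finset.mem_singleton_self i⟩⟩, by
      rintro ⟨x, hx⟩
      simp only [Finset.mem_singleton] at hx
      subst hx
      rfl⟩
  rw [pminor, Matrix.det_unique]
  rfl

lemma exists_source {n : ℕ} (A : Matrix (Fin n) (Fin n) (ZMod 2))
    (hdiag : ∀ i, A i i = 1)
    (hnc : ∀ σ : Equiv.Perm (Fin n), (∀ i, A (σ i) i = 1) → σ = 1) :
    ∀ t : Finset (Fin n), t.Nonempty → ∃ a ∈ t, ∀ b ∈ t, A b a = 1 → b = a := by
  intro t ht
  by_contra hcon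
  push_neg at hcon
  choose g hg1 hg2 hg3 using hcon
  classical
  set f : Fin n → Fin n := fun a => if h : a ∈ t then g a h else a with hfdef
  have hAf : ∀ y, A (f y) y = 1 := by
    intro y
    rw [hfdef]
    dsimp only
    split
    · rename_i h; exact hg2 y h
    · exact hdiag y
  have hstay : ∀ j, f^[j] ht.choose ∈ t := by
    intro j
    induction j with
    | zero => exact ht.choose_spec
    | succ j ih =>
      rw [Function.iterate_succ_apply', hfdef]
      dsimp only
      rw [dif_pos ih]
      exact hg1 _ ih
  have hnontriv : ∀ y ∈ t, f y ≠ y := by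
    intro y hy
    rw [hfdef]
    dsimp only
    rw [dif_pos hy]
    exact hg3 y hy
  -- pigeonhole
  have : ¬ Function.Injective (fun j : ℕ => f^[j] ht.choose) := by
    intro hinj
    haveI : Infinite (Fin n) := Infinite.of_injective _ hinj
    exact not_finite (Fin n)
  obtain ⟨p, q, heqpq, hne⟩ := Function.not_injective_iff.mp this
  wlog hpq : p < q generalizing p q
  · exact this q p heqpq.symm (Ne.symm hne) (by omega)
  set x := f^[p] ht.choose with hxdef
  have hxt : x ∈ t := hstay p
  have hfix : f^[q - p] x = x := by
    rw [hxdef, ← Function.iterate_add_apply]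
    rw [show q - p + p = q by omega]
    exact heqpq.symm
  obtain ⟨ρ, hρ1, hρc, -⟩ := core_cycle A hdiag f hAf x (q - p) (by omega) hfix (hnontriv x hxt)
  exact hρ1 (hnc ρ hρc)

lemma topo_list {n : ℕ} (A : Matrix (Fin n) (Fin n) (ZMod 2))
    (hsrc : ∀ t : Finset (Fin n), t.Nonempty → ∃ a ∈ t, ∀ b ∈ t, A b a = 1 → b = a) :
    ∀ t : Finset (Fin n), ∃ l : List (Fin n),
      l.Nodup ∧ l.toFinset = t ∧ l.Pairwise (fun a b => A b a = 0) := by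
  intro t
  induction t using Finset.strongInduction with
  | _ t ih =>
    rcases t.eq_empty_or_nonempty with rfl | ht
    · exact ⟨[], by simp⟩
    · obtain ⟨a, hat, ha⟩ := hsrc t ht
      obtain ⟨l', h1, h2, h3⟩ := ih (t.erase a) (Finset.erase_ssubset hat)
      refine ⟨a :: l', ?_, ?_, ?_⟩
      · refine List.nodup_cons.mpr ⟨?_, h1⟩
        intro hmem
        have : a ∈ t.erase a := h2 ▸ List.mem_toFinset.mpr hmem
        exact (Finset.notMem_erase a t) this
      · rw [List.toFinset_cons, h2, Finset.insert_erase hat]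
      · refine List.pairwise_cons.mpr ⟨?_, h3⟩
        intro b hb
        have hbt : b ∈ t.erase a := h2 ▸ List.mem_toFinset.mpr hb
        have hba : b ≠ a := Finset.ne_of_mem_erase hbt
        have hbt' : b ∈ t := Finset.mem_of_mem_erase hbt
        rcases (by decide : ∀ x : ZMod 2, x = 0 ∨ x = 1) (A b a) with h | h
        · exact h
        · exact absurd (ha b hbt' h) hba

theorem stmt_0 {n : ℕ} (A : Matrix (Fin n) (Fin n) (ZMod 2))
    (hproper : ∀ s : Finset (Fin n), s ≠ Finset.univ → pminor A s = 1)
    (hdet : A.det = 1) :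
    ∃ (μ : Equiv.Perm (Fin n)) (U : Matrix (Fin n) (Fin n) (ZMod 2)),
      U.BlockTriangular id ∧ (∀ i, U i i = 1) ∧
      (μ.permMatrix (ZMod 2))⁻¹ * A * μ.permMatrix (ZMod 2) = U := by
  classical
  have hall : ∀ s, pminor A s = 1 := by
    intro s
    by_cases h : s = Finset.univ
    · rw [h, pminor_univ]; exact hdet
    · exact hproper s h
  have hdiag : ∀ i, A i i = 1 := fun i => by rw [← pminor_singleton A i]; exact hall {i}
  have hnc := no_cycle A hdiag hall
  have hsrc := exists_source A hdiag hnc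
  obtain ⟨l, hnodup, htofin, hpair⟩ := topo_list A hsrc Finset.univ
  have hlen : l.length = n := by
    have h1 : l.toFinset.card = l.length := List.toFinset_card_of_nodup hnodup
    rw [htofin] at h1
    simpa [Finset.card_univ] using h1.symm
  -- build the permutation ν
  set gfun : Fin n → Fin n := fun i => l.get (Fin.cast hlen.symm i) with hgdef
  have hginj : Function.Injective gfun := by
    intro a b hab
    have := (List.nodup_iff_injective_get.mp hnodup) hab
    exact Fin.cast_injective hlen.symm this
  set ν : Equiv.Perm (Fin n) := Equiv.ofBijective gfun ((Finite.injective_iff_bijective).mp hginj)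
    with hνdef
  have hνapply : ∀ i, ν i = l.get (Fin.cast hlen.symm i) := fun i => rfl
  have hkey : ∀ i j : Fin n, j < i → A (ν i) (ν j) = 0 := by
    intro i j hij
    have hp := List.pairwise_iff_get.mp hpair (Fin.cast hlen.symm j) (Fin.cast hlen.symm i)
      (by rw [Fin.lt_def]; exact hij)
    rw [hνapply, hνapply]
    exact hp
  refine ⟨ν⁻¹, A.submatrix ν ν, ?_, ?_, ?_⟩
  · intro i j hij
    exact hkey i j hij
  · intro i
    exact hdiag (ν i)
  · -- matrix algebra
    have hinv : ((ν⁻¹).permMatrix (ZMod 2))⁻¹ = ν.permMatrix (ZMod 2) := by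
      apply Matrix.inv_eq_right_inv
      rw [Equiv.Perm.permMatrix, Equiv.Perm.permMatrix, ← PEquiv.toMatrix_trans,
        ← Equiv.toPEquiv_trans]
      have : (ν⁻¹ : Equiv.Perm (Fin n)).trans ν = Equiv.refl (Fin n) := by
        ext x; simp
      rw [this, Equiv.toPEquiv_refl, PEquiv.toMatrix_refl]
    rw [hinv]
    rw [Equiv.Perm.permMatrix, PEquiv.toMatrix_toPEquiv_mul, Equiv.Perm.permMatrix,
      PEquiv.mul_toMatrix_toPEquiv, Matrix.submatrix_submatrix]
    ext i j
    simp [Equiv.Perm.inv_def]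
end

section
/- A finite simple digraph G on n labeled vertices (with at most one edge from i to j for each ordered pair, and no loops) is acyclic if and only if the matrix Eₙ + A(G) over ℤ/2, where A(G) is the adjacency matrix of G, has all principal minors equal to 1. -/
open Matrix

/-- Adjacency matrix over `ZMod 2` of a digraph on `n` labeled vertices. -/
def adjMat {n : ℕ} (G : Fin n → Fin n → Bool) : Matrix (Fin n) (Fin n) (ZMod 2) :=
  Matrix.of fun i j => if G i j then 1 else 0

/-- A digraph is acyclic if it has no directed cycle (of any length). -/
def IsAcyclicDigraph {n : ℕ} (G : Fin n → Fin n → Bool) : Prop :=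
  ∀ i, ¬ Relation.TransGen (fun a b => G a b = true) i i

section Cyc
variable {α : Type*} (r : α → α → Prop)

/-- A nonempty list forming a directed cycle: consecutive elements are related by `r`,
and the last element is related to the first. -/
def IsCyc (c : List α) : Prop :=
  c ≠ [] ∧ c.IsChain r ∧ ∀ x ∈ c.getLast?, ∀ y ∈ c.head?, r x y

variable {r}

lemma isCyc_rotate {u v : List α} (h : IsCyc r (u ++ v)) : IsCyc r (v ++ u) := by
  obtain ⟨hne, hch, hcl⟩ := h
  rcases eq_or_ne u [] with rfl | hu
  · exact ⟨by simpa using hne, by simpa using hch, by simpa using hcl⟩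
  rcases eq_or_ne v [] with rfl | hv
  · exact ⟨by simpa using hne, by simpa using hch, by simpa using hcl⟩
  rw [List.isChain_append] at hch
  obtain ⟨h1, h2, h12⟩ := hch
  refine ⟨by simp [hv], List.isChain_append.mpr ⟨h2, h1, ?_⟩, ?_⟩
  · intro x hx y hy
    apply hcl
    · rwa [List.getLast?_append_of_ne_nil _ hv]
    · rwa [List.head?_append_of_ne_nil _ hu]
  · intro x hx y hy
    rw [List.getLast?_append_of_ne_nil _ hu] at hx
    rw [List.head?_append_of_ne_nil _ hv] at hy
    exact h12 x hx y hy

/-- In a directed cycle of minimal length (in a loopless digraph), every vertex of the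
cycle has a unique out-neighbour among the vertices of the cycle. -/
lemma isCyc_unique_succ (hirr : ∀ a, ¬ r a a)
    {c : List α} (hc : IsCyc r c) (hmin : ∀ d, IsCyc r d → c.length ≤ d.length)
    {a : α} (ha : a ∈ c) : ∃! b, b ∈ c ∧ r a b := by
  obtain ⟨l₁, l₂, rfl⟩ := List.append_of_mem ha
  have hc2 : IsCyc r ((l₂ ++ l₁) ++ [a]) := by
    rw [List.append_assoc]
    apply isCyc_rotate
    rw [List.append_assoc]
    simpa using hc
  generalize hgen : l₂ ++ l₁ = d at hc2
  have hperm : ((d ++ [a]) : List α).Perm (l₁ ++ a :: l₂) := by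
    have h1 : ((d ++ [a]) : List α).Perm ((l₁ ++ [a]) ++ l₂) := by
      rw [← hgen, List.append_assoc]; exact List.perm_append_comm
    simpa using h1
  have hlen : (d ++ [a]).length = (l₁ ++ a :: l₂).length := hperm.length_eq
  -- d is nonempty, else the cycle is a loop
  have hdne : d ≠ [] := by
    rintro rfl
    have := hc2.2.2 a (by simp) a (by simp)
    exact hirr a this
  have hhead : (d ++ [a]).head? = some (d.head hdne) := by
    rw [List.head?_append_of_ne_nil _ hdne, List.head?_eq_head]
  -- key: any b in the cycle with r a b must be the head of d
  have huniq : ∀ b, b ∈ l₁ ++ a :: l₂ → r a b → b = d.head hdne := by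
    intro b hb hab
    have hbne : b ≠ a := fun h => hirr a (h ▸ hab)
    have hbd : b ∈ d := by
      have : b ∈ d ++ [a] := hperm.mem_iff.mpr hb
      simpa [hbne] using this
    obtain ⟨m₁, m₂, hdeq⟩ := List.append_of_mem hbd
    rcases eq_or_ne m₁ [] with rfl | hm₁
    · have hh : d.head? = some b := by rw [hdeq]; simp
      rw [List.head?_eq_head hdne] at hh
      exact (Option.some_inj.mp hh).symm
    · exfalso
      -- there is a shorter cycle `b :: m₂ ++ [a]`
      have hshort : IsCyc r (b :: (m₂ ++ [a])) := by
        refine ⟨by simp, ?_, ?_⟩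
        · have := hc2.2.1
          rw [hdeq] at this
          have h2 : List.IsChain r ((m₁ ++ b :: m₂) ++ [a]) := this
          rw [List.append_assoc] at h2
          exact (List.isChain_append.mp h2).2.1
        · intro x hx y hy
          simp only [List.head?_cons, Option.mem_def, Option.some.injEq] at hy
          have : (b :: (m₂ ++ [a])).getLast? = some a := by
            rw [show b :: (m₂ ++ [a]) = (b :: m₂) ++ [a] by simp, List.getLast?_concat]
          rw [this] at hx
          simp only [Option.mem_def, Option.some.injEq] at hx
          subst hx; subst hy
          exact hab
      have hlt := hmin _ hshort
      rw [← hlen, hdeq] at hlt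
      have hm := List.length_pos_iff.mpr hm₁
      simp only [List.length_append, List.length_cons, List.length_singleton] at hlt ⊢
      omega
  refine ⟨d.head hdne, ⟨?_, ?_⟩, fun b hb => huniq b hb.1 hb.2⟩
  · exact hperm.mem_iff.mp (by simp [List.head_mem])
  · have := hc2.2.2 a (by rw [List.getLast?_concat]; rfl) (d.head hdne) (by rw [hhead]; rfl)
    exact this

end Cyc

theorem stmt_2 {n : ℕ} (G : Fin n → Fin n → Bool) (hloop : ∀ i, G i i = false) :
    IsAcyclicDigraph G ↔ ∀ s : Finset (Fin n), pminor (1 + adjMat G) s = 1 := by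
  constructor
  · -- acyclic → all principal minors equal 1
    intro hacyc s
    set r := Relation.TransGen (fun a b : Fin n => G a b = true) with hr
    haveI : IsIrrefl (Fin n) r := ⟨hacyc⟩
    haveI : IsTrans (Fin n) r := ⟨fun _ _ _ h h' => Relation.TransGen.trans h h'⟩
    haveI : IsWellFounded (Fin n) r := ⟨Finite.wellFounded_of_trans_of_irrefl r⟩
    set f : Fin n → Ordinal := IsWellFounded.rank r with hfdef
    have hf : ∀ i j : Fin n, G i j = true → f i < f j := fun i j h =>
      IsWellFounded.rank_lt_of_rel (Relation.TransGen.single h)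
    set M := (1 + adjMat G).submatrix (fun i : s => (i : Fin n)) (fun j : s => (j : Fin n))
      with hM
    have hbt : M.BlockTriangular (fun i : s => f (i : Fin n)) := by
      intro i j hij
      show (1 + adjMat G) (i : Fin n) (j : Fin n) = 0
      have hij' : f (j : Fin n) < f (i : Fin n) := hij
      have hne : (i : Fin n) ≠ (j : Fin n) := by
        rintro h
        rw [h] at hij'
        exact lt_irrefl _ hij'
      rw [Matrix.add_apply, Matrix.one_apply_ne hne, zero_add]
      simp only [adjMat, Matrix.of_apply]
      split
      · rename_i h
        exact absurd (hf _ _ h) (not_lt_of_gt hij')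
      · rfl
    rw [pminor, ← hM, hbt.det]
    apply Finset.prod_eq_one
    intro k _
    have hblock : M.toSquareBlock (fun i : s => f (i : Fin n)) k = 1 := by
      ext i j
      rcases eq_or_ne i j with rfl | hij
      · show (1 + adjMat G) _ _ = (1 : Matrix _ _ (ZMod 2)) i i
        simp [Matrix.add_apply, Matrix.one_apply, adjMat, hloop]
      · have hne : ((i : s) : Fin n) ≠ ((j : s) : Fin n) := by
          intro h
          exact hij (Subtype.ext (Subtype.ext h))
        show (1 + adjMat G) _ _ = (1 : Matrix _ _ (ZMod 2)) i j
        rw [Matrix.one_apply_ne hij, Matrix.add_apply, Matrix.one_apply_ne hne, zero_add]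
        simp only [adjMat, Matrix.of_apply]
        split
        · rename_i h
          have h1 := hf _ _ h
          have h2 : f ((i : s) : Fin n) = k := i.2
          have h3 : f ((j : s) : Fin n) = k := j.2
          rw [h2, h3] at h1
          exact absurd h1 (lt_irrefl _)
        · rfl
    rw [hblock, Matrix.det_one]
  · -- all principal minors equal 1 → acyclic
    intro hpm
    classical
    intro i hi
    set E := fun a b : Fin n => G a b = true with hE
    have hirr : ∀ a, ¬ E a a := by
      intro a h
      rw [hE] at h
      rw [hloop a] at h
      exact Bool.false_ne_true h
    rw [Relation.TransGen.head'_iff] at hi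
    obtain ⟨j, hij, hji⟩ := hi
    obtain ⟨l, hchain, hlast⟩ := List.exists_isChain_cons_of_relationReflTransGen hji
    have hc₀ : IsCyc E (j :: l) := by
      refine ⟨by simp, hchain, ?_⟩
      intro x hx y hy
      rw [List.getLast?_eq_getLast (by simp), hlast] at hx
      simp only [List.head?_cons, Option.mem_def, Option.some.injEq] at hx hy
      subst hx; subst hy
      exact hij
    have hex : ∃ k : ℕ, ∃ c, IsCyc E c ∧ c.length = k := ⟨_, _, hc₀, rfl⟩
    obtain ⟨c, hc, hck⟩ := Nat.find_spec hex
    have hmin' : ∀ d, IsCyc E d → c.length ≤ d.length := fun d hd =>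
      hck ▸ Nat.find_min' hex ⟨d, hd, rfl⟩
    have hcne : c ≠ [] := hc.1
    have hdet : ((1 + adjMat G).submatrix (fun i : (c.toFinset : Finset (Fin n)) => (i : Fin n))
        (fun j : (c.toFinset : Finset (Fin n)) => (j : Fin n))).det = 0 := by
      rw [← Matrix.exists_mulVec_eq_zero_iff]
      refine ⟨fun _ => 1, ?_, ?_⟩
      · intro h0
        have := congrFun h0 ⟨c.head hcne, List.mem_toFinset.mpr (List.head_mem hcne)⟩
        simp at this
      · funext a
        obtain ⟨a, haa⟩ := a
        have hac : a ∈ c := List.mem_toFinset.mp haa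
        obtain ⟨b₀, ⟨hb₀c, hb₀e⟩, hb₀u⟩ := isCyc_unique_succ hirr hc hmin' hac
        have hfil : c.toFinset.filter (fun j => G a j = true) = {b₀} := by
          ext x
          simp only [Finset.mem_filter, List.mem_toFinset, Finset.mem_singleton]
          constructor
          · rintro ⟨hx, he⟩
            exact hb₀u x ⟨hx, he⟩
          · rintro rfl
            exact ⟨hb₀c, hb₀e⟩
        simp only [Matrix.mulVec, dotProduct, Matrix.submatrix_apply, mul_one,
          Matrix.add_apply, Matrix.one_apply, adjMat, Matrix.of_apply]
        rw [Finset.sum_coe_sort (c.toFinset)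
          (fun j => ((if a = j then (1 : ZMod 2) else 0) + (if G a j then 1 else 0)))]
        rw [Finset.sum_add_distrib, Finset.sum_ite_eq, if_pos haa, Finset.sum_boole, hfil]
        simp
        decide
    have := hpm c.toFinset
    rw [pminor, hdet] at this
    exact absurd this (by decide)
end

section
/- The map G ↦ Eₙ + A(G) is a bijection from the set of acyclic digraphs on n labeled vertices to the set M(n) of n×n matrices over ℤ/2 all of whose principal minors equal 1. -/
open Matrix

section CycleLemmas

variable {α : Type*} {E : α → α → Prop}

set_option linter.deprecated false in
@[simp] lemma chain_nil' {a : α} : List.Chain E a [] := List.IsChain.singleton a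

set_option linter.deprecated false in
lemma chain_cons' {a b : α} {l : List α} :
    List.Chain E a (b :: l) ↔ E a b ∧ List.Chain E b l := List.isChain_cons_cons

set_option linter.deprecated false in
lemma chain_split' {a c : α} {l₁ l₂ : List α} :
    List.Chain E a (l₁ ++ c :: l₂) ↔ List.Chain E a (l₁ ++ [c]) ∧ List.Chain E c l₂ :=
  List.isChain_cons_split

lemma chain_mem_transGen {a b : α} {l : List α} (h : List.Chain E a l) (hb : b ∈ l) :
    Relation.TransGen E a b := by
  induction l generalizing a with
  | nil => simp at hb
  | cons c t ih =>
    rw [chain_cons'] at h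
    rcases List.mem_cons.mp hb with rfl | hb
    · exact .single h.1
    · exact (ih h.2 hb).head h.1

lemma chain_nodup_or_cycle {a : α} {l : List α} (h : List.Chain E a l) :
    (a :: l).Nodup ∨ ∃ x, Relation.TransGen E x x := by
  induction l generalizing a with
  | nil => left; simp
  | cons c t ih =>
    rw [chain_cons'] at h
    rcases ih h.2 with hnd | hc
    · by_cases ha : a ∈ c :: t
      · exact Or.inr ⟨a, chain_mem_transGen (chain_cons'.mpr h) ha⟩
      · exact Or.inl (List.nodup_cons.mpr ⟨ha, hnd⟩)
    · exact Or.inr hc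

lemma transGen_chain {a b : α} (h : Relation.TransGen E a b) :
    ∃ l, List.Chain E a (l ++ [b]) := by
  induction h with
  | single h => exact ⟨[], by simp [chain_cons', h]⟩
  | @tail b c _ h ih =>
    obtain ⟨l, hl⟩ := ih
    refine ⟨l ++ [b], ?_⟩
    have : l ++ [b] ++ [c] = l ++ b :: [c] := by simp
    rw [this]
    exact chain_split'.mpr ⟨hl, by simp [chain_cons', h]⟩

lemma not_nodup_exists {l : List α} (h : ¬ l.Nodup) :
    ∃ b p q, l = p ++ b :: q ∧ b ∈ q := by
  induction l with
  | nil => simp at h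
  | cons x t ih =>
    by_cases hx : x ∈ t
    · exact ⟨x, [], t, rfl, hx⟩
    · have : ¬ t.Nodup := fun hn => h (List.nodup_cons.mpr ⟨hx, hn⟩)
      obtain ⟨b, p, q, hl, hb⟩ := ih this
      exact ⟨b, x :: p, q, by rw [hl]; rfl, hb⟩

lemma cycle_shorten {a : α} {l : List α} (h : List.Chain E a (l ++ [a]))
    (hnd : ¬ (a :: l).Nodup) :
    ∃ a' l', List.Chain E a' (l' ++ [a']) ∧ l'.length < l.length := by
  by_cases ha : a ∈ l
  · obtain ⟨p, q, rfl⟩ := List.append_of_mem ha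
    have h' : List.Chain E a (p ++ a :: (q ++ [a])) := by simpa using h
    exact ⟨a, p, (chain_split'.mp h').1, by simp⟩
  · have hl : ¬ l.Nodup := fun hn => hnd (List.nodup_cons.mpr ⟨ha, hn⟩)
    obtain ⟨b, p, q, rfl, hb⟩ := not_nodup_exists hl
    obtain ⟨p₂, q₂, rfl⟩ := List.append_of_mem hb
    have h1 : List.Chain E a (p ++ b :: ((p₂ ++ b :: q₂) ++ [a])) := by simpa using h
    have h2 := (chain_split'.mp h1).2
    have h3 : List.Chain E b (p₂ ++ b :: (q₂ ++ [a])) := by simpa using h2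
    exact ⟨b, p₂, (chain_split'.mp h3).1, by simp; omega⟩

lemma exists_min_cycle (hex : ∃ x, Relation.TransGen E x x) :
    ∃ a l, List.Chain E a (l ++ [a]) ∧ (a :: l).Nodup ∧
      ∀ a' l', List.Chain E a' (l' ++ [a']) → l.length ≤ l'.length := by
  classical
  obtain ⟨x, hx⟩ := hex
  obtain ⟨l₀, hl₀⟩ := transGen_chain hx
  let P : ℕ → Prop := fun k => ∃ a l, l.length = k ∧ List.Chain E a (l ++ [a])
  have hPex : ∃ k, P k := ⟨l₀.length, x, l₀, rfl, hl₀⟩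
  obtain ⟨a, l, hlen, hch⟩ := Nat.find_spec hPex
  have hmin : ∀ a' l', List.Chain E a' (l' ++ [a']) → l.length ≤ l'.length := by
    intro a' l' h'
    rw [hlen]
    exact Nat.find_min' hPex ⟨a', l', rfl, h'⟩
  refine ⟨a, l, hch, ?_, hmin⟩
  by_contra hnd
  obtain ⟨a', l', hch', hlt⟩ := cycle_shorten hch hnd
  exact absurd (hmin a' l' hch') (by omega)


lemma nodup_append_cons_inj {α : Type*} {x : α} : ∀ {p₁ p₂ q₁ q₂ : List α},
    (p₁ ++ x :: q₁).Nodup → p₁ ++ x :: q₁ = p₂ ++ x :: q₂ → p₁ = p₂ ∧ q₁ = q₂ := by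
  intro p₁
  induction p₁ with
  | nil =>
    intro p₂ q₁ q₂ hnd heq
    cases p₂ with
    | nil => simpa using heq
    | cons z p₂' =>
      simp only [List.nil_append, List.cons_append, List.cons.injEq] at heq
      obtain ⟨rfl, rfl⟩ := heq
      exfalso
      exact (List.nodup_cons.mp hnd).1 (by simp)
  | cons y p₁' ih =>
    intro p₂ q₁ q₂ hnd heq
    cases p₂ with
    | nil =>
      simp only [List.cons_append, List.nil_append, List.cons.injEq] at heq
      obtain ⟨rfl, rfl⟩ := heq
      exfalso
      exact (List.nodup_cons.mp hnd).1 (by simp)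
    | cons z p₂' =>
      simp only [List.cons_append, List.cons.injEq] at heq
      obtain ⟨rfl, heq⟩ := heq
      obtain ⟨h1, h2⟩ := ih (List.nodup_cons.mp hnd).2 heq
      exact ⟨by rw [h1], h2⟩

section U
variable {α : Type*} {E : α → α → Prop}
lemma unique_succ (hirr : ∀ x, ¬ E x x) {a : α} {l : List α}
    (hch : List.Chain E a (l ++ [a])) (hnd : (a :: l).Nodup)
    (hmin : ∀ a' l', List.Chain E a' (l' ++ [a']) → l.length ≤ l'.length)
    {x : α} (hx : x ∈ a :: l) :
    ∃ y, (y ∈ a :: l ∧ E x y) ∧ ∀ z, z ∈ a :: l → E x z → z = y := by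
  rcases List.mem_cons.mp hx with rfl | hxl
  · -- x = a
    cases l with
    | nil =>
      exact absurd (chain_cons'.mp hch).1 (hirr x)
    | cons c t =>
      have hac : E x c := (chain_cons'.mp hch).1
      refine ⟨c, ⟨by simp, hac⟩, ?_⟩
      intro z hz hEz
      rcases List.mem_cons.mp hz with rfl | hzl
      · exact absurd hEz (hirr z)
      · obtain ⟨p, q, hl⟩ := List.append_of_mem hzl
        have hch' : List.Chain E x (p ++ z :: (q ++ [x])) := by
          rw [hl] at hch; simpa using hch
        have hz2 := (chain_split'.mp hch').2
        have hcyc : List.Chain E x ((z :: q) ++ [x]) := chain_cons'.mpr ⟨hEz, hz2⟩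
        have hle := hmin x (z :: q) hcyc
        have hlen := congrArg List.length hl
        simp at hle hlen
        have hp : p = [] := by
          rw [← List.length_eq_zero_iff]; omega
        subst hp
        simp at hl
        exact hl.1.symm
  · -- x ∈ l
    obtain ⟨p, q, hl⟩ := List.append_of_mem hxl
    have hchx : List.Chain E a (p ++ x :: (q ++ [a])) := by rw [hl] at hch; simpa using hch
    have hsp := chain_split'.mp hchx
    have hlnd : l.Nodup := (List.nodup_cons.mp hnd).2
    have key : ∀ z, z ∈ a :: l → E x z → ∃ q'', q ++ [a] = z :: q'' := by
      intro z hz hEz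
      rcases List.mem_cons.mp hz with rfl | hzl
      · -- z = a : closing chord
        have hcyc : List.Chain E z (p ++ x :: [z]) :=
          chain_split'.mpr ⟨hsp.1, by simp [chain_cons', hEz]⟩
        have hcyc' : List.Chain E z ((p ++ [x]) ++ [z]) := by simpa using hcyc
        have hle := hmin z (p ++ [x]) hcyc'
        have hlen := congrArg List.length hl
        simp at hle hlen
        have hq : q = [] := by rw [← List.length_eq_zero_iff]; omega
        subst hq
        exact ⟨[], rfl⟩
      · obtain ⟨p', q', hl'⟩ := List.append_of_mem hzl
        have hchz : List.Chain E a (p' ++ z :: (q' ++ [a])) := by rw [hl'] at hch; simpa using hch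
        have hzq' := (chain_split'.mp hchz).2
        have hxmem : x ∈ p' ∨ x = z ∨ x ∈ q' := by
          have : x ∈ p' ++ z :: q' := hl' ▸ hxl
          simpa using this
        rcases hxmem with hxp | rfl | hxq
        · -- x before z
          obtain ⟨p₁, q₁, hp'⟩ := List.append_of_mem hxp
          have hl2 : l = p₁ ++ x :: (q₁ ++ z :: q') := by rw [hl', hp']; simp
          obtain ⟨hpeq, hqeq⟩ := nodup_append_cons_inj (hl ▸ hlnd) (hl.symm.trans hl2)
          have hcyc : List.Chain E a (p ++ x :: (z :: (q' ++ [a]))) :=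
            chain_split'.mpr ⟨hsp.1, chain_cons'.mpr ⟨hEz, hzq'⟩⟩
          have hcyc' : List.Chain E a ((p ++ x :: z :: q') ++ [a]) := by simpa using hcyc
          have hle := hmin a (p ++ x :: z :: q') hcyc'
          have hlen := congrArg List.length hl
          have hlen2 := congrArg List.length hqeq
          simp at hle hlen hlen2
          have hq₁ : q₁ = [] := by rw [← List.length_eq_zero_iff]; omega
          subst hq₁
          simp at hqeq
          refine ⟨q' ++ [a], ?_⟩
          rw [hqeq]
          simp
        · exact absurd hEz (hirr x)
        · -- x after z : strictly shorter cycle, contradiction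
          exfalso
          obtain ⟨q₁, q₂, hq'⟩ := List.append_of_mem hxq
          have hzq2 : List.Chain E z (q₁ ++ x :: (q₂ ++ [a])) := by
            rw [hq'] at hzq'; simpa using hzq'
          have hcyc : List.Chain E z (q₁ ++ x :: [z]) :=
            chain_split'.mpr ⟨(chain_split'.mp hzq2).1, by simp [chain_cons', hEz]⟩
          have hcyc' : List.Chain E z ((q₁ ++ [x]) ++ [z]) := by simpa using hcyc
          have hle := hmin z (q₁ ++ [x]) hcyc'
          have hlen := congrArg List.length hl'
          have hlen2 := congrArg List.length hq'
          simp at hle hlen hlen2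
          omega
    -- existence
    have hqa : ∃ y q'', (q ++ [a] = y :: q'') ∧ E x y ∧ y ∈ a :: l := by
      cases q with
      | nil =>
        have : E x a := (chain_cons'.mp hsp.2).1
        exact ⟨a, [], rfl, this, by simp⟩
      | cons c t =>
        have : E x c := (chain_cons'.mp hsp.2).1
        refine ⟨c, t ++ [a], rfl, this, ?_⟩
        have : c ∈ l := by rw [hl]; simp
        simp [this]
    obtain ⟨y, q'', hqeq, hExy, hymem⟩ := hqa
    refine ⟨y, ⟨hymem, hExy⟩, ?_⟩
    intro z hz hEz
    obtain ⟨q₃, hq₃⟩ := key z hz hEz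
    rw [hqeq] at hq₃
    exact (List.cons.injEq .. ▸ hq₃).1.symm


end U

lemma zmod2_cases2 (x : ZMod 2) : x = 0 ∨ x = 1 := by revert x; decide

lemma det_one_add_acyclic {ι : Type*} [Fintype ι] [DecidableEq ι] (B : Matrix ι ι (ZMod 2))
    (hacyc : ∀ i, ¬ Relation.TransGen (fun a b => B a b = 1) i i) : (1 + B).det = 1 := by
  rcases Nat.eq_zero_or_pos (Fintype.card ι) with h0 | hpos
  · haveI := Fintype.card_eq_zero_iff.mp h0
    exact Matrix.det_isEmpty
  · have hpow : ∀ k i j, (B ^ (k + 1)) i j ≠ 0 →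
        ∃ l : List ι, l.length = k ∧ List.Chain (fun a b => B a b = 1) i (l ++ [j]) := by
      intro k
      induction k with
      | zero =>
        intro i j hne
        rw [pow_one] at hne
        rcases zmod2_cases2 (B i j) with h | h
        · exact absurd h hne
        · exact ⟨[], rfl, by simpa [chain_cons'] using h⟩
      | succ k ih =>
        intro i j hne
        rw [pow_succ', Matrix.mul_apply] at hne
        obtain ⟨m, -, hm⟩ := Finset.exists_ne_zero_of_sum_ne_zero hne
        obtain ⟨l, hlen, hch⟩ := ih m j (right_ne_zero_of_mul hm)
        have h1 : B i m = 1 := by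
          rcases zmod2_cases2 (B i m) with h | h
          · exact absurd h (left_ne_zero_of_mul hm)
          · exact h
        exact ⟨m :: l, by simp [hlen], chain_cons'.mpr ⟨h1, hch⟩⟩
    have hnil : B ^ Fintype.card ι = 0 := by
      ext i j
      simp only [Matrix.zero_apply]
      by_contra hne
      obtain ⟨k, hk⟩ : ∃ k, Fintype.card ι = k + 1 :=
        ⟨Fintype.card ι - 1, (Nat.succ_pred_eq_of_pos hpos).symm⟩
      rw [hk] at hne
      obtain ⟨l, hlen, hch⟩ := hpow k i j hne
      rcases chain_nodup_or_cycle hch with hnd | ⟨x, hx⟩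
      · have := hnd.length_le_card
        simp [hlen, hk] at this
      · exact hacyc x hx
    have hu : IsUnit (1 + B) := IsNilpotent.isUnit_one_add ⟨_, hnil⟩
    have hdet : IsUnit (1 + B).det := (Matrix.isUnit_iff_isUnit_det _).mp hu
    rcases zmod2_cases2 (1 + B).det with h | h
    · exact absurd h hdet.ne_zero
    · exact h

lemma diag_one {n : ℕ} (A : Matrix (Fin n) (Fin n) (ZMod 2))
    (h : ∀ s : Finset (Fin n), pminor A s = 1) (i : Fin n) : A i i = 1 := by
  have hi := h {i}
  rw [pminor] at hi
  haveI : Subsingleton (({i} : Finset (Fin n)) : Type) :=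
    ⟨fun a b => Subtype.ext (by
      have ha := a.2; have hb := b.2
      simp only [Finset.mem_singleton] at ha hb
      rw [ha, hb])⟩
  rw [Matrix.det_eq_elem_of_subsingleton _ ⟨i, by simp⟩] at hi
  simpa using hi

lemma acyclic_of_pminors {n : ℕ} (A : Matrix (Fin n) (Fin n) (ZMod 2))
    (h : ∀ s : Finset (Fin n), pminor A s = 1) :
    ∀ i, ¬ Relation.TransGen (fun a b => a ≠ b ∧ A a b = 1) i i := by
  intro i hi
  have hdiag := diag_one A h
  set E : Fin n → Fin n → Prop := fun a b => a ≠ b ∧ A a b = 1 with hEdef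
  have hirr : ∀ x, ¬ E x x := fun x hx => hx.1 rfl
  obtain ⟨a, l, hch, hnd, hmin⟩ := exists_min_cycle ⟨i, hi⟩
  set s : Finset (Fin n) := (a :: l).toFinset with hs
  have hdet0 : pminor A s = 0 := by
    rw [pminor, ← Matrix.exists_mulVec_eq_zero_iff]
    refine ⟨fun _ => 1, ?_, ?_⟩
    · intro h0
      have := congrFun h0 ⟨a, by simp [hs]⟩
      simp at this
    · funext x
      obtain ⟨x, hxs⟩ := x
      have hxl : x ∈ a :: l := by simpa [hs] using hxs
      obtain ⟨y₀, ⟨hy₀mem, hEy₀⟩, huniq⟩ := unique_succ hirr hch hnd hmin hxl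
      have hy₀s : y₀ ∈ s := by simpa [hs] using hy₀mem
      simp only [Matrix.mulVec, dotProduct, Matrix.submatrix_apply, mul_one,
        Pi.zero_apply]
      rw [Finset.sum_coe_sort s (fun y => A x y)]
      rw [← Finset.add_sum_erase s _ hxs]
      have hsum : ∑ y ∈ s.erase x, A x y = 1 := by
        rw [Finset.sum_eq_single_of_mem y₀
          (Finset.mem_erase.mpr ⟨Ne.symm hEy₀.1, hy₀s⟩)]
        · exact hEy₀.2
        · intro b hb hbne
          obtain ⟨hbx, hbs⟩ := Finset.mem_erase.mp hb
          rcases zmod2_cases2 (A x b) with h0 | h1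
          · exact h0
          · exact absurd (huniq b (by simpa [hs] using hbs) ⟨Ne.symm hbx, h1⟩) hbne
      rw [hsum, hdiag x]
      decide
  have := h s
  rw [hdet0] at this
  exact absurd this (by decide)

lemma pminor_one_add_adjMat {n : ℕ} (G : Fin n → Fin n → Bool) (hG : IsAcyclicDigraph G)
    (s : Finset (Fin n)) : pminor (1 + adjMat G) s = 1 := by
  rw [pminor]
  have hsub : (1 + adjMat G).submatrix (fun i : s => (i : Fin n)) (fun j : s => (j : Fin n))
      = 1 + (adjMat G).submatrix (fun i : s => (i : Fin n)) (fun j : s => (j : Fin n)) := by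
    ext i j
    simp [Matrix.submatrix_apply, Matrix.add_apply, Matrix.one_apply]
  rw [hsub]
  apply det_one_add_acyclic
  intro i htg
  apply hG (i : Fin n)
  refine Relation.TransGen.lift Subtype.val ?_ _ _ htg
  intro a b hab
  show G (a : Fin n) (b : Fin n) = true
  simp only [Matrix.submatrix_apply, adjMat, Matrix.of_apply] at hab
  by_contra hg
  simp [hg] at hab

theorem stmt_3 {n : ℕ} :
    Set.BijOn (fun G : Fin n → Fin n → Bool => 1 + adjMat G)
      {G | (∀ i, G i i = false) ∧ IsAcyclicDigraph G}
      {A : Matrix (Fin n) (Fin n) (ZMod 2) | ∀ s : Finset (Fin n), pminor A s = 1} := by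
  classical
  refine ⟨?_, ?_, ?_⟩
  · intro G hG s
    exact pminor_one_add_adjMat G hG.2 s
  · intro G _ G' _ heq
    have h2 : adjMat G = adjMat G' := add_left_cancel heq
    funext i j
    have hij := congrFun (congrFun h2 i) j
    simp only [adjMat, Matrix.of_apply] at hij
    cases hgi : G i j <;> cases hgj : G' i j <;> simp_all
  · intro A hA
    have hA' : ∀ s : Finset (Fin n), pminor A s = 1 := hA
    set G : Fin n → Fin n → Bool := fun i j => decide (i ≠ j ∧ A i j = 1) with hGdef
    have hdiag := diag_one A hA'
    have himg : (fun G : Fin n → Fin n → Bool => 1 + adjMat G) G = A := by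
      ext i j
      by_cases hij : i = j
      · subst hij
        simp [adjMat, hGdef, hdiag i, Matrix.add_apply, Matrix.one_apply]
      · have h1 : (1 : Matrix (Fin n) (Fin n) (ZMod 2)) i j = 0 := Matrix.one_apply_ne hij
        rcases zmod2_cases2 (A i j) with h0 | hone
        · simp [adjMat, hGdef, hij, h0, Matrix.add_apply, h1]
        · simp [adjMat, hGdef, hij, hone, Matrix.add_apply, h1]
    refine ⟨G, ⟨?_, ?_⟩, himg⟩
    · intro i; simp [hGdef]
    · intro i hi
      apply acyclic_of_pminors A hA' i
      refine Relation.TransGen.mono ?_ _ _ hi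
      intro a b hab
      simpa [hGdef] using hab
end CycleLemmas
end

section
/- Let A be an n×n real matrix with entries in {0,1} such that every principal minor of A is an odd integer. Then every principal minor of A equals 1. -/
open Matrix

namespace Stmt4Aux

variable {n : ℕ} (A : Matrix (Fin n) (Fin n) ℝ)

/-- There is a closed walk of length `ℓ` in the digraph with edges `A a b = 1`, `a ≠ b`. -/
def hasCW (ℓ : ℕ) : Prop :=
  ∃ w : ZMod ℓ → Fin n, ∀ i, A (w i) (w (i + 1)) = 1 ∧ w i ≠ w (i + 1)

lemma key (s : Finset (Fin n)) (σ : Equiv.Perm ↥s) (hσ : σ ≠ 1)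
    (hterm : ∀ j : ↥s, A ↑(σ j) ↑j = 1) :
    ∃ m : ℕ, 1 ≤ m ∧ m ≤ s.card ∧ hasCW A m ∧
      (m = s.card →
        (∀ z : ↥s, σ z ≠ z) ∧
        (∀ y : ↥s, (⇑σ⁻¹)^[m] y = y) ∧
        (∀ y z : ↥s, ∃ a : ℕ, a < m ∧ (⇑σ⁻¹)^[a] y = z)) := by
  obtain ⟨x, hx⟩ : ∃ x : ↥s, σ x ≠ x := by
    by_contra h
    push_neg at h
    exact hσ (Equiv.ext h)
  set π : Equiv.Perm ↥s := σ⁻¹ with hπ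
  have hσfix : ∀ z : ↥s, π z = z ↔ σ z = z := by
    intro z
    rw [hπ, Equiv.Perm.inv_eq_iff_eq, eq_comm]
  have hπx : π x ≠ x := fun h => hx ((hσfix x).mp h)
  -- minimal period
  have hper0 : Function.IsPeriodicPt ⇑π (orderOf π) x := by
    unfold Function.IsPeriodicPt Function.IsFixedPt
    rw [Equiv.Perm.iterate_eq_pow, pow_orderOf_eq_one]
    rfl
  set m : ℕ := Function.minimalPeriod ⇑π x with hmdef
  have hm : 0 < m := hper0.minimalPeriod_pos (orderOf_pos π)
  have hperm : (⇑π)^[m] x = x := Function.isPeriodicPt_minimalPeriod ⇑π x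
  have hmod : ∀ a : ℕ, (⇑π)^[a % m] x = (⇑π)^[a] x := fun a =>
    Function.iterate_mod_minimalPeriod_eq
  have hinj : ∀ a b : ℕ, a < m → b < m → (⇑π)^[a] x = (⇑π)^[b] x → a = b := by
    intro a b ha hb h
    exact Function.iterate_injOn_Iio_minimalPeriod ha hb h
  -- points on the orbit are not fixed
  have hnotfix : ∀ a : ℕ, π ((⇑π)^[a] x) ≠ (⇑π)^[a] x := by
    intro a h
    apply hπx
    have h1 : (⇑π)^[a+1] x = (⇑π)^[a] x := by
      rw [Function.iterate_succ_apply']; exact h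
    rw [Function.iterate_succ_apply] at h1
    exact (Function.Injective.iterate π.injective a) h1
  haveI : NeZero m := ⟨hm.ne'⟩
  -- m ≤ s.card
  have hcardle : m ≤ s.card := by
    have : Function.Injective (fun a : Fin m => (⇑π)^[a.val] x) := by
      intro a b h
      exact Fin.ext (hinj a.val b.val a.isLt b.isLt h)
    have := Fintype.card_le_of_injective _ this
    rwa [Fintype.card_fin, Fintype.card_coe] at this
  refine ⟨m, hm, hcardle, ?_, ?_⟩
  · -- the closed walk
    refine ⟨fun t => ↑((⇑π)^[t.val] x), fun t => ?_⟩
    have hval : (t + 1).val = (t.val + 1) % m := by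
      rw [ZMod.val_add]
      rw [ZMod.val_one_eq_one_mod, Nat.add_mod_mod]
    have hnext : (⇑π)^[(t+1).val] x = π ((⇑π)^[t.val] x) := by
      rw [hval, hmod (t.val + 1), Function.iterate_succ_apply']
    constructor
    · show A ↑((⇑π)^[t.val] x) ↑((⇑π)^[(t+1).val] x) = 1
      rw [hnext]
      have := hterm (π ((⇑π)^[t.val] x))
      simpa [hπ] using this
    · show (↑((⇑π)^[t.val] x) : Fin n) ≠ ↑((⇑π)^[(t+1).val] x)
      rw [hnext]
      intro h
      exact hnotfix t.val (Subtype.ext h).symm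
  · -- covering when m = card
    intro hmcard
    have hbij : Function.Bijective (fun a : Fin m => (⇑π)^[a.val] x) := by
      rw [Fintype.bijective_iff_injective_and_card]
      constructor
      · intro a b h
        exact Fin.ext (hinj a.val b.val a.isLt b.isLt h)
      · rw [Fintype.card_fin, Fintype.card_coe, hmcard]
    have hsurj : ∀ y : ↥s, ∃ b : ℕ, b < m ∧ (⇑π)^[b] x = y := by
      intro y
      obtain ⟨a, ha⟩ := hbij.2 y
      exact ⟨a.val, a.isLt, ha⟩
    have hperall : ∀ y : ↥s, (⇑π)^[m] y = y := by
      intro y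
      obtain ⟨b, _, hb⟩ := hsurj y
      rw [← hb, ← Function.iterate_add_apply, Nat.add_comm m b,
        Function.iterate_add_apply, hperm]
    refine ⟨?_, hperall, ?_⟩
    · intro z h
      obtain ⟨b, _, hb⟩ := hsurj z
      rw [← (hσfix z)] at h
      rw [← hb] at h
      exact hnotfix b h
    · intro y z
      obtain ⟨b, hbm, hb⟩ := hsurj y
      obtain ⟨c, hcm, hc⟩ := hsurj z
      refine ⟨(m + c - b) % m, Nat.mod_lt _ hm, ?_⟩
      rw [← hb, ← Function.iterate_add_apply, ← hc]
      rw [← hmod ((m + c - b) % m + b), Nat.mod_add_mod]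
      have : m + c - b + b = m + c := by omega
      rw [this, Nat.add_mod_left, Nat.mod_eq_of_lt hcm]

lemma det_eq (h01 : ∀ i j, A i j = 0 ∨ A i j = 1) (s : Finset (Fin n)) :
    pminor A s = ∑ σ ∈ Finset.univ.filter
        (fun σ : Equiv.Perm ↥s => ∀ j : ↥s, A ↑(σ j) ↑j = 1),
      ((Equiv.Perm.sign σ : ℤ) : ℝ) := by
  classical
  rw [pminor, Matrix.det_apply]
  rw [← Finset.sum_filter_add_sum_filter_not Finset.univ
    (fun σ : Equiv.Perm ↥s => ∀ j : ↥s, A ↑(σ j) ↑j = 1)]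
  have hz : ∑ σ ∈ Finset.univ.filter
      (fun σ : Equiv.Perm ↥s => ¬ ∀ j : ↥s, A ↑(σ j) ↑j = 1),
      Equiv.Perm.sign σ • ∏ i, (A.submatrix (fun i : ↥s => (i : Fin n)) (fun j : ↥s => (j : Fin n))) (σ i) i = 0 := by
    apply Finset.sum_eq_zero
    intro σ hσ
    rw [Finset.mem_filter] at hσ
    push_neg at hσ
    obtain ⟨j, hj⟩ := hσ.2
    have h0 : A ↑(σ j) ↑j = 0 := (h01 _ _).resolve_right hj
    have : ∏ i, (A.submatrix (fun i : ↥s => (i : Fin n)) (fun j : ↥s => (j : Fin n))) (σ i) i = 0 :=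
      Finset.prod_eq_zero (Finset.mem_univ j) (by simpa using h0)
    rw [this, smul_zero]
  rw [hz, add_zero]
  apply Finset.sum_congr rfl
  intro σ hσ
  rw [Finset.mem_filter] at hσ
  have : ∏ i, (A.submatrix (fun i : ↥s => (i : Fin n)) (fun j : ↥s => (j : Fin n))) (σ i) i = 1 :=
    Finset.prod_eq_one (fun j _ => by simpa using hσ.2 j)
  rw [this]
  simp [Units.smul_def, zsmul_eq_mul]

lemma diag_one (hodd : ∀ s : Finset (Fin n), ∃ m : ℤ, Odd m ∧ pminor A s = (m : ℝ))
    (h01 : ∀ i j, A i j = 0 ∨ A i j = 1) (v : Fin n) : A v v = 1 := by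
  obtain ⟨mz, hmo, hm⟩ := hodd {v}
  haveI : Unique ↥({v} : Finset (Fin n)) :=
    ⟨⟨⟨v, Finset.mem_singleton_self v⟩⟩, fun x => Subtype.ext (Finset.mem_singleton.mp x.2)⟩
  have hpm : pminor A {v} = A v v := by
    rw [pminor, Matrix.det_unique, Matrix.submatrix_apply]
    have hd : ((default : ↥({v} : Finset (Fin n))) : Fin n) = v :=
      Finset.mem_singleton.mp (default : ↥({v} : Finset (Fin n))).2
    rw [hd]
  rcases h01 v v with h | h
  · exfalso
    rw [hpm, h] at hm
    have : mz = 0 := by exact_mod_cast hm.symm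
    rw [this] at hmo
    simp [Int.odd_iff] at hmo
  · rw [h]

lemma no_walk (h01 : ∀ i j, A i j = 0 ∨ A i j = 1)
    (hodd : ∀ s : Finset (Fin n), ∃ m : ℤ, Odd m ∧ pminor A s = (m : ℝ)) :
    ¬ ∃ ℓ : ℕ, 0 < ℓ ∧ hasCW A ℓ := by
  intro hex
  classical
  obtain ⟨ℓ, ⟨hℓpos, w, hw⟩, hmin⟩ :
      ∃ ℓ, (0 < ℓ ∧ hasCW A ℓ) ∧ ∀ k, k < ℓ → ¬(0 < k ∧ hasCW A k) :=
    ⟨Nat.find hex, Nat.find_spec hex, fun k hk => Nat.find_min hex hk⟩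
  haveI : NeZero ℓ := ⟨hℓpos.ne'⟩
  have hℓ2 : 2 ≤ ℓ := by
    by_contra hc
    have h1 : ℓ = 1 := by omega
    subst h1
    exact (hw 0).2 (congrArg w (Subsingleton.elim _ _))
  -- the minimal closed walk is injective
  have hwinj : Function.Injective w := by
    intro a b hab
    by_contra hne
    set d := (b - a).val with hd
    have hd0 : 0 < d := by
      rcases Nat.eq_zero_or_pos d with h | h
      · exact absurd (sub_eq_zero.mp ((ZMod.val_eq_zero _).mp h)).symm hne
      · exact h
    haveI : NeZero d := ⟨hd0.ne'⟩
    have hdl : d < ℓ := ZMod.val_lt _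
    have hcast : ((d : ℕ) : ZMod ℓ) = b - a := by
      rw [hd]; simp [ZMod.natCast_val, ZMod.cast_id]
    apply hmin d hdl
    refine ⟨hd0, fun t => w (a + (t.val : ZMod ℓ)), fun t => ?_⟩
    have hval : (t + 1).val = (t.val + 1) % d := by
      rw [ZMod.val_add, ZMod.val_one_eq_one_mod, Nat.add_mod_mod]
    rcases Nat.lt_or_ge (t.val + 1) d with h | h
    · have hv : (t + 1).val = t.val + 1 := by rw [hval, Nat.mod_eq_of_lt h]
      have : (((t + 1).val : ℕ) : ZMod ℓ) = (t.val : ZMod ℓ) + 1 := by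
        rw [hv]; push_cast; ring
      show A (w (a + (t.val : ZMod ℓ))) (w (a + ((t+1).val : ZMod ℓ))) = 1
        ∧ w (a + (t.val : ZMod ℓ)) ≠ w (a + ((t+1).val : ZMod ℓ))
      rw [this, ← add_assoc]
      exact hw (a + (t.val : ZMod ℓ))
    · -- t.val + 1 = d
      have htv : t.val + 1 = d := by have := t.val_lt; omega
      have hv : (t + 1).val = 0 := by rw [hval, htv, Nat.mod_self]
      show A (w (a + (t.val : ZMod ℓ))) (w (a + ((t+1).val : ℕ))) = 1
        ∧ w (a + (t.val : ZMod ℓ)) ≠ w (a + ((t+1).val : ℕ))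
      rw [hv]
      have hb : a + ((0 : ℕ) : ZMod ℓ) = a := by push_cast; ring
      have hb2 : w a = w b := hab
      have hstep : a + (t.val : ZMod ℓ) + 1 = b := by
        have : ((t.val + 1 : ℕ) : ZMod ℓ) = ((d : ℕ) : ZMod ℓ) := by rw [htv]
        rw [hcast] at this
        push_cast at this
        rw [add_assoc, this]
        ring
      rw [hb, hb2, ← hstep]
      exact hw (a + (t.val : ZMod ℓ))
  -- the vertex set of the walk
  set S : Finset (Fin n) := Finset.image w Finset.univ with hS
  have hScard : S.card = ℓ := by
    rw [hS, Finset.card_image_of_injective _ hwinj, Finset.card_univ, ZMod.card]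
  have hmemS : ∀ t, w t ∈ S := fun t => Finset.mem_image_of_mem w (Finset.mem_univ t)
  set f : ZMod ℓ → ↥S := fun t => ⟨w t, hmemS t⟩ with hf
  have hfinj : Function.Injective f := fun a b h => hwinj (congrArg Subtype.val h)
  have hfbij : Function.Bijective f := by
    rw [Fintype.bijective_iff_injective_and_card]
    exact ⟨hfinj, by rw [ZMod.card, Fintype.card_coe, hScard]⟩
  set e : ZMod ℓ ≃ ↥S := Equiv.ofBijective f hfbij with he
  have hee : ∀ t, e t = f t := fun t => rfl
  -- the Hamiltonian rotation σ₀
  set σ₀ : Equiv.Perm ↥S := e.permCongr (Equiv.subRight (1 : ZMod ℓ)) with hσ₀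
  have hσ₀f : ∀ t, σ₀ (f t) = f (t - 1) := by
    intro t
    rw [hσ₀, Equiv.permCongr_apply]
    rw [← hee t, Equiv.symm_apply_apply]
    rfl
  set G : Finset (Equiv.Perm ↥S) := Finset.univ.filter
      (fun σ : Equiv.Perm ↥S => ∀ j : ↥S, A ↑(σ j) ↑j = 1) with hG
  have hG1 : (1 : Equiv.Perm ↥S) ∈ G := by
    rw [hG, Finset.mem_filter]
    exact ⟨Finset.mem_univ _, fun j => by simpa using diag_one A hodd h01 ↑j⟩
  have hσ₀G : σ₀ ∈ G := by
    rw [hG, Finset.mem_filter]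
    refine ⟨Finset.mem_univ _, fun j => ?_⟩
    obtain ⟨t, ht⟩ := hfbij.2 j
    rw [← ht, hσ₀f]
    show A (w (t - 1)) (w t) = 1
    have := (hw (t - 1)).1
    rwa [sub_add_cancel] at this
  have hσ₀ne : σ₀ ≠ 1 := by
    intro h
    have h2 : f (0 - 1) = f 0 := by rw [← hσ₀f 0, h]; rfl
    have h3 : (0 : ZMod ℓ) - 1 = 0 := hfinj h2
    have h4 : ((1 : ℕ) : ZMod ℓ) = 0 := by
      have := congrArg (· + 1) h3
      simp at this
      exact_mod_cast this.symm
    rw [ZMod.natCast_eq_zero_iff] at h4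
    exact absurd (Nat.le_of_dvd one_pos h4) (by omega)
  -- facts about nontrivial good permutations
  have hfacts : ∀ ρ : Equiv.Perm ↥S, ρ ∈ G → ρ ≠ 1 →
      (∀ z : ↥S, ρ z ≠ z) ∧ (∀ y : ↥S, (⇑ρ⁻¹)^[ℓ] y = y) ∧
      (∀ y z : ↥S, ∃ a : ℕ, a < ℓ ∧ (⇑ρ⁻¹)^[a] y = z) := by
    intro ρ hρG hρne
    obtain ⟨m, hm1, hmle, hcwm, hrest⟩ :=
      key A S ρ hρne (fun j => (Finset.mem_filter.mp hρG).2 j)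
    have hmeq : m = ℓ := by
      rcases Nat.lt_or_ge m ℓ with h | h
      · exact absurd ⟨hm1, hcwm⟩ (hmin m h)
      · omega
    have := hrest (by rw [hmeq, hScard])
    rw [hmeq] at this
    exact this
  -- sign of nontrivial good permutations
  have hsign : ∀ ρ : Equiv.Perm ↥S, ρ ∈ G → ρ ≠ 1 →
      ((Equiv.Perm.sign ρ : ℤ) : ℝ) = (-1 : ℝ) ^ (ℓ + 1) := by
    intro ρ hρG hρne
    obtain ⟨hfpf, _, hcov⟩ := hfacts ρ hρG hρne
    have hcyc : ρ.IsCycle := by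
      refine ⟨f 0, hfpf (f 0), fun y hy => ?_⟩
      obtain ⟨a, _, ha⟩ := hcov (f 0) y
      refine ⟨-(a : ℤ), ?_⟩
      rw [_root_.zpow_neg, zpow_natCast, ← inv_pow, ← Equiv.Perm.iterate_eq_pow]
      exact ha
    have hsupp : ρ.support = Finset.univ :=
      Finset.eq_univ_iff_forall.mpr (fun x => Equiv.Perm.mem_support.mpr (hfpf x))
    have := hcyc.sign
    rw [hsupp, Finset.card_univ, Fintype.card_coe, hScard] at this
    rw [this]
    push_cast
    ring
  -- compute the minor on S
  have hsum : pminor A S = ((G.erase 1).card : ℝ) * (-1 : ℝ) ^ (ℓ + 1) + 1 := by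
    rw [det_eq A h01 S, ← hG, ← Finset.sum_erase_add G _ hG1]
    congr 1
    · rw [Finset.sum_congr rfl (fun ρ hρ => hsign ρ (Finset.mem_of_mem_erase hρ)
        (Finset.ne_of_mem_erase hρ)), Finset.sum_const, nsmul_eq_mul]
    · simp
  set H := (G.erase 1).card with hH
  have hH1 : 0 < H := Finset.card_pos.mpr ⟨σ₀, Finset.mem_erase.mpr ⟨hσ₀ne, hσ₀G⟩⟩
  have hHeven : Even H := by
    obtain ⟨mz, hmzodd, heq⟩ := hodd S
    rw [hsum] at heq
    have hint : mz = (H : ℤ) * (-1) ^ (ℓ + 1) + 1 := by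
      have : ((H : ℤ) * (-1) ^ (ℓ + 1) + 1 : ℤ) = ((mz : ℤ)) := by
        apply Int.cast_injective (α := ℝ)
        push_cast
        linarith [heq]
      omega
    rw [hint] at hmzodd
    rw [Int.odd_add] at hmzodd
    have heven : Even ((H : ℤ) * (-1) ^ (ℓ + 1)) := by
      rw [← Int.not_odd_iff_even]
      intro ho
      exact (by decide : ¬ Even (1 : ℤ)) (hmzodd.mp ho)
    rcases Int.even_mul.mp heven with h | h
    · exact_mod_cast h
    · exfalso
      rw [Int.even_pow] at h
      exact (by decide : ¬ Even (-1 : ℤ)) h.1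
  have hH2 : 2 ≤ H := by
    obtain ⟨r, hr⟩ := hHeven
    omega
  obtain ⟨σ, hσm, τ, hτm, hστ⟩ := Finset.one_lt_card.mp hH2
  obtain ⟨hσfpf, hσper, hσcov⟩ :=
    hfacts σ (Finset.mem_of_mem_erase hσm) (Finset.ne_of_mem_erase hσm)
  obtain ⟨hτfpf, hτper, hτcov⟩ :=
    hfacts τ (Finset.mem_of_mem_erase hτm) (Finset.ne_of_mem_erase hτm)
  have hσG' : ∀ j : ↥S, A ↑(σ j) ↑j = 1 :=
    fun j => (Finset.mem_filter.mp (Finset.mem_of_mem_erase hσm)).2 j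
  have hτG' : ∀ j : ↥S, A ↑(τ j) ↑j = 1 :=
    fun j => (Finset.mem_filter.mp (Finset.mem_of_mem_erase hτm)).2 j
  -- two distinct Hamiltonian cycles give a shorter closed walk
  obtain ⟨i, hi⟩ : ∃ i : ↥S, σ i ≠ τ i := by
    by_contra h
    push_neg at h
    exact hστ (Equiv.ext h)
  obtain ⟨a, haℓ, ha⟩ := hτcov i (σ i)
  have ha0 : a ≠ 0 := by
    intro h
    rw [h] at ha
    exact hσfpf i ha.symm
  have haℓ1 : a ≠ ℓ - 1 := by
    intro h
    have h2 : (⇑τ⁻¹)^[a + 1] i = τ⁻¹ (σ i) := by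
      rw [Function.iterate_succ_apply', ha]
    have h3 : a + 1 = ℓ := by omega
    rw [h3, hτper i] at h2
    apply hi
    have := congrArg τ h2
    rw [Equiv.Perm.coe_inv, Equiv.apply_symm_apply] at this
    rw [← this]
  -- the general edge along the τ-orbit
  have hedge : ∀ c : ℕ, A ↑((⇑τ⁻¹)^[c] i) ↑((⇑τ⁻¹)^[c + 1] i) = 1 ∧
      (↑((⇑τ⁻¹)^[c] i) : Fin n) ≠ ↑((⇑τ⁻¹)^[c + 1] i) := by
    intro c
    have hz : τ ((⇑τ⁻¹)^[c + 1] i) = (⇑τ⁻¹)^[c] i := by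
      rw [Function.iterate_succ_apply', Equiv.Perm.coe_inv, Equiv.apply_symm_apply]
    constructor
    · rw [← hz]; exact hτG' _
    · intro h
      have := Subtype.ext h
      rw [← hz] at this
      exact hτfpf _ this
  apply hmin (a + 1) (by omega)
  haveI : NeZero (a + 1) := ⟨by omega⟩
  refine ⟨by omega, fun t => if t.val = 0 then ↑(σ i) else ↑((⇑τ⁻¹)^[t.val - 1] i),
    fun t => ?_⟩
  have hval : (t + 1).val = (t.val + 1) % (a + 1) := by
    rw [ZMod.val_add, ZMod.val_one_eq_one_mod, Nat.add_mod_mod]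
  rcases Nat.eq_zero_or_pos t.val with h0 | h0
  · -- t.val = 0
    have hv : (t + 1).val = 1 := by
      rw [hval, h0, Nat.mod_eq_of_lt (by omega)]
    simp only [h0, hv]
    norm_num
    constructor
    · exact hσG' i
    · intro h
      exact hσfpf i h
  · rcases Nat.lt_or_ge t.val a with h | h
    · -- 1 ≤ t.val < a
      have hv : (t + 1).val = t.val + 1 := by
        rw [hval, Nat.mod_eq_of_lt (by omega)]
      simp only [hv, if_neg (by omega : ¬ t.val = 0), if_neg (by omega : ¬ t.val + 1 = 0)]
      have : t.val + 1 - 1 = (t.val - 1) + 1 := by omega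
      rw [this]
      exact hedge (t.val - 1)
    · -- t.val = a
      have htv : t.val = a := by have := t.val_lt; omega
      have hv : (t + 1).val = 0 := by rw [hval, htv, Nat.mod_self]
      simp only [hv, htv, if_neg (by omega : ¬ a = 0), if_pos rfl]
      rw [← ha]
      have : a = (a - 1) + 1 := by omega
      rw [this]
      have h2 : a - 1 + 1 - 1 = a - 1 := by omega
      rw [h2]
      exact hedge (a - 1)

end Stmt4Aux

theorem stmt_4 {n : ℕ} (A : Matrix (Fin n) (Fin n) ℝ)
    (h01 : ∀ i j, A i j = 0 ∨ A i j = 1)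
    (hodd : ∀ s : Finset (Fin n), ∃ m : ℤ, Odd m ∧ pminor A s = (m : ℝ)) :
    ∀ s : Finset (Fin n), pminor A s = 1 := by
  intro s
  rw [Stmt4Aux.det_eq A h01 s]
  have hG : Finset.univ.filter
      (fun σ : Equiv.Perm ↥s => ∀ j : ↥s, A ↑(σ j) ↑j = 1) = {1} := by
    apply Finset.eq_singleton_iff_unique_mem.mpr
    constructor
    · rw [Finset.mem_filter]
      exact ⟨Finset.mem_univ _, fun j => by simpa using Stmt4Aux.diag_one A hodd h01 ↑j⟩
    · intro σ hσ
      by_contra hne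
      obtain ⟨m, hm1, _, hcw, _⟩ :=
        Stmt4Aux.key A s σ hne (fun j => (Finset.mem_filter.mp hσ).2 j)
      exact Stmt4Aux.no_walk A h01 hodd ⟨m, hm1, hcw⟩
  rw [hG, Finset.sum_singleton]
  simp
end

section
/- The number of n×n real matrices with entries in {0,1} all of whose principal minors are 1 equals the number of acyclic digraphs on n labeled vertices. -/
open Matrix

open Equiv

lemma det_eq_one_of_acyclic {m : Type*} [Fintype m] [DecidableEq m] {R : Type*} [CommRing R]
    (M : Matrix m m R) (r : m → m → Prop) (htrans : Transitive r) (hirr : ∀ i, ¬ r i i)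
    (hdiag : ∀ i, M i i = 1) (hoff : ∀ i j, i ≠ j → ¬ r i j → M i j = 0) :
    M.det = 1 := by
  rw [Matrix.det_apply]
  rw [Finset.sum_eq_single (1 : Equiv.Perm m)]
  · simp [hdiag]
  · intro σ _ hσ
    have hz : ∃ i, M (σ i) i = 0 := by
      by_contra hc
      push_neg at hc
      have key : ∀ i, σ i = i ∨ r (σ i) i := by
        intro i
        by_cases h : σ i = i
        · exact Or.inl h
        · right; by_contra hr; exact hc i (hoff _ _ h hr)
      obtain ⟨i, hi⟩ : ∃ i, σ i ≠ i := by
        by_contra h; push_neg at h; exact hσ (Equiv.ext h)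
      have claim : ∀ k : ℕ, (σ ^ (k+1)) i = i ∨ r ((σ ^ (k+1)) i) i := by
        intro k
        induction k with
        | zero => simpa using key i
        | succ k ih =>
          have hpow : (σ ^ (k+2)) i = σ ((σ ^ (k+1)) i) := by
            rw [pow_succ']; rfl
          rcases ih with h | h
          · rw [hpow, h]
            rcases key i with h' | h'
            · exact absurd h' hi
            · exact Or.inr h'
          · set j := (σ ^ (k+1)) i with hj
            rw [hpow]
            rcases key j with h' | h'
            · rw [h']; exact Or.inr h
            · exact Or.inr (htrans h' h)
      have hN : 2 ≤ orderOf σ := by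
        rcases Nat.lt_or_ge (orderOf σ) 2 with h | h
        · interval_cases h' : orderOf σ
          · exact absurd (orderOf_eq_zero_iff.mp h') (by
              exact not_not.mpr (isOfFinOrder_of_finite σ))
          · exact absurd (orderOf_eq_one_iff.mp h') hσ
        · exact h
      have hpowN : (σ ^ orderOf σ) i = i := by rw [pow_orderOf_eq_one]; rfl
      have hstep : (σ ^ orderOf σ) i = σ ((σ ^ (orderOf σ - 1)) i) := by
        conv_lhs => rw [show orderOf σ = (orderOf σ - 1) + 1 by omega]
        rw [pow_succ']; rfl
      rcases claim (orderOf σ - 2) with h | h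
      · rw [show orderOf σ - 2 + 1 = orderOf σ - 1 by omega] at h
        have : σ i = i := by
          calc σ i = σ ((σ ^ (orderOf σ - 1)) i) := by rw [h]
          _ = (σ ^ orderOf σ) i := hstep.symm
          _ = i := hpowN
        exact hi this
      · rw [show orderOf σ - 2 + 1 = orderOf σ - 1 by omega] at h
        set j := (σ ^ (orderOf σ - 1)) i with hj
        have hσj : σ j = i := by rw [← hstep, hpowN]
        have hji : j ≠ i := by
          intro he; rw [he] at hσj; exact hi hσj
        rcases key j with h' | h'
        · rw [hσj] at h'; exact hji h'.symm
        · rw [hσj] at h'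
          exact hirr i (htrans h' h)
    obtain ⟨i, hi⟩ := hz
    have hp0 : ∏ x, M (σ x) x = 0 := Finset.prod_eq_zero (Finset.mem_univ i) hi
    rw [hp0, smul_zero]
  · intro h; simp at h

open Fin.NatCast in
lemma det_cycleMat (m : ℕ) :
    (Matrix.of fun k l : Fin (m+2) => if k = l ∨ l = k + 1 then (1:ℝ) else 0).det
      = 1 + (-1:ℝ)^(m+1) := by
  classical
  set B := (Matrix.of fun k l : Fin (m+2) => if k = l ∨ l = k + 1 then (1:ℝ) else 0) with hB
  set d : Equiv.Perm (Fin (m+2)) := (finRotate (m+2))⁻¹ with hd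
  have hdapp : ∀ k, d k = k - 1 := by
    intro k
    rw [hd, Equiv.Perm.inv_def, Equiv.symm_apply_eq, finRotate_succ_apply, sub_add_cancel]
  have h1d : (1 : Equiv.Perm (Fin (m+2))) ≠ d := by
    intro h
    have := congrArg (fun σ : Equiv.Perm (Fin (m+2)) => σ 0) h
    simp only [Equiv.Perm.one_apply, hdapp] at this
    have : (1 : Fin (m+2)) = 0 := by
      have := sub_eq_zero.mpr this.symm
      simpa using this
    exact one_ne_zero this
  have hBentry : ∀ σ : Equiv.Perm (Fin (m+2)), (∀ k, B (σ k) k ≠ 0) → σ = 1 ∨ σ = d := by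
    intro σ hσ
    have key : ∀ k, σ k = k ∨ σ k = k - 1 := by
      intro k
      have := hσ k
      rw [hB] at this
      simp only [Matrix.of_apply] at this
      by_contra hcon
      push_neg at hcon
      rw [if_neg] at this
      · exact this rfl
      · rintro (h | h)
        · exact hcon.1 h
        · exact hcon.2 (eq_sub_of_add_eq h.symm)
    by_cases hfix : ∃ k, σ k = k
    · left
      obtain ⟨k0, hk0⟩ := hfix
      have step : ∀ j : ℕ, σ (k0 + (j : Fin (m+2))) = k0 + (j : Fin (m+2)) := by
        intro j
        induction j with
        | zero => simpa using hk0
        | succ j ih =>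
          have hcast : ((j+1 : ℕ) : Fin (m+2)) = (j : Fin (m+2)) + 1 := by push_cast; try ring
          rw [hcast, ← add_assoc]
          set x := k0 + (j : Fin (m+2)) + 1 with hx
          rcases key x with h | h
          · exact h
          · exfalso
            have hxsub : x - 1 = k0 + (j : Fin (m+2)) := by rw [hx, add_sub_cancel_right]
            rw [hxsub, ← ih] at h
            have := σ.injective h
            rw [hx] at this
            have h10 : (1 : Fin (m+2)) = 0 := by
              have := sub_eq_zero.mpr this
              simpa [add_sub_cancel_left] using this
            exact one_ne_zero h10
      ext l
      have h2 := step (l - k0 : Fin (m+2)).val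
      rw [Fin.cast_val_eq_self] at h2
      have h3 : k0 + (l - k0) = l := by abel
      rw [h3] at h2
      simp [h2]
    · right
      push_neg at hfix
      ext k
      rcases key k with h | h
      · exact absurd h (hfix k)
      · rw [h, hdapp]
  rw [Matrix.det_apply]
  rw [← Finset.sum_subset (Finset.subset_univ ({1, d} : Finset (Equiv.Perm (Fin (m+2)))))]
  · rw [Finset.sum_insert (by simpa using h1d), Finset.sum_singleton]
    have t1 : ∀ k, B ((1 : Equiv.Perm (Fin (m+2))) k) k = 1 := by
      intro k; rw [hB]; simp
    have t2 : ∀ k, B (d k) k = 1 := by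
      intro k; rw [hB, hdapp]
      simp only [Matrix.of_apply]
      rw [if_pos (Or.inr (by rw [sub_add_cancel]))]
    have hsign : Equiv.Perm.sign d = (-1 : ℤˣ)^(m+1) := by
      rw [hd, Equiv.Perm.sign_inv, sign_finRotate]; rfl
    simp only [t1, t2, Finset.prod_const_one, Equiv.Perm.sign_one, hsign]
    norm_num [Units.smul_def]
  · intro σ _ hσ
    have : ¬ (σ = 1 ∨ σ = d) := by
      simpa using hσ
    have hzero : ∃ k, B (σ k) k = 0 := by
      by_contra hc
      push_neg at hc
      exact this (hBentry σ hc)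
    obtain ⟨k, hk⟩ := hzero
    have hp0 : ∏ x, B (σ x) x = 0 := Finset.prod_eq_zero (Finset.mem_univ k) hk
    rw [hp0, smul_zero]

lemma pminor_singleton_s5 {m : Type*} [Fintype m] [DecidableEq m] {R : Type*} [CommRing R]
    (A : Matrix m m R) (i : m) : pminor A {i} = A i i := by
  haveI : Unique ({i} : Finset m) := ⟨⟨⟨i, Finset.mem_singleton_self i⟩⟩,
    fun a => Subtype.ext (Finset.mem_singleton.mp a.2)⟩
  rw [pminor, Matrix.det_unique]
  simp only [Matrix.submatrix_apply]
  have hd : ((default : ({i} : Finset m)) : m) = i :=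
    Finset.mem_singleton.mp (default : ({i} : Finset m)).2
  rw [hd]

lemma transGen_to_walk {α : Type*} {R : α → α → Prop} {a b : α} (h : Relation.TransGen R a b) :
    ∃ M, ∃ f : ℕ → α, 1 ≤ M ∧ f 0 = a ∧ f M = b ∧ ∀ k < M, R (f k) (f (k+1)) := by
  induction h with
  | @single c hr =>
    refine ⟨1, fun k => if k = 0 then a else c, le_refl 1, by simp, by simp, ?_⟩
    intro k hk
    interval_cases k
    simpa using hr
  | @tail c e hab hbc ih =>
    obtain ⟨M, f, hM, h0, hMb, hstep⟩ := ih
    refine ⟨M+1, fun k => if k ≤ M then f k else e, le_trans hM (Nat.le_succ M),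
      by simp [h0], by simp, ?_⟩
    intro k hk
    rcases Nat.lt_or_ge k M with h | h
    · simp only [if_pos (le_of_lt h), if_pos (Nat.succ_le_of_lt h)]
      exact hstep k h
    · have hkM : k = M := by omega
      subst hkM
      simp only []
      rw [if_pos (le_refl k), if_neg (by omega : ¬ k + 1 ≤ k), hMb]
      exact hbc

lemma no_cycle_of_pminors {n : ℕ} (A : Matrix (Fin n) (Fin n) ℝ)
    (h01 : ∀ i j, A i j = 0 ∨ A i j = 1)
    (hp : ∀ s : Finset (Fin n), pminor A s = 1)
    {i : Fin n} (hcyc : Relation.TransGen (fun a b => a ≠ b ∧ A a b = 1) i i) : False := by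
  classical
  set R : Fin n → Fin n → Prop := fun a b => a ≠ b ∧ A a b = 1 with hR
  have hdiag : ∀ j, A j j = 1 := fun j => by rw [← pminor_singleton_s5 A j]; exact hp {j}
  set Q : ℕ → Prop := fun m => 1 ≤ m ∧ ∃ f : ℕ → Fin n, f 0 = f m ∧ ∀ k < m, R (f k) (f (k+1))
    with hQ
  have hex : ∃ m, Q m := by
    obtain ⟨M, f, hM, h0, hMb, hstep⟩ := transGen_to_walk hcyc
    exact ⟨M, hM, f, by rw [h0, hMb], hstep⟩
  obtain ⟨m, ⟨hm1, f, hclose, hstep⟩, hmin⟩ : ∃ m, Q m ∧ ∀ m' < m, ¬ Q m' :=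
    ⟨Nat.find hex, Nat.find_spec hex, fun m' h => Nat.find_min hex h⟩
  have hm2 : 2 ≤ m := by
    by_contra h
    have hm1' : m = 1 := by omega
    have h1 := hstep 0 (by omega)
    rw [hm1'] at hclose
    rw [show (0:ℕ)+1 = 1 from rfl, ← hclose] at h1
    exact h1.1 rfl
  have h1m : (1:ℕ) % m = 1 := Nat.mod_eq_of_lt (by omega)
  have hF : ∀ k : ℕ, R (f (k % m)) (f ((k+1) % m)) := by
    intro k
    have hlt : k % m < m := Nat.mod_lt _ (by omega)
    rcases Nat.lt_or_ge (k % m + 1) m with h | h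
    · have heq : (k+1) % m = k % m + 1 := by
        rw [Nat.add_mod, h1m, Nat.mod_eq_of_lt h]
      rw [heq]
      exact hstep _ hlt
    · have hkm : k % m = m - 1 := by omega
      have heq : (k+1) % m = 0 := by
        rw [Nat.add_mod, h1m, hkm, show m - 1 + 1 = m by omega, Nat.mod_self]
      rw [heq, hclose, hkm]
      have h2 := hstep (m-1) (by omega)
      rw [show m - 1 + 1 = m by omega] at h2
      exact h2
  have hinj : ∀ a b, a < b → b < m → f a ≠ f b := by
    intro a b hab hbm heq
    apply hmin (b - a) (by omega)
    refine ⟨by omega, fun k => f (a + k), ?_, ?_⟩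
    · show f (a + 0) = f (a + (b - a))
      rw [Nat.add_zero, show a + (b-a) = b by omega, heq]
    · intro k hk
      show R (f (a + k)) (f (a + (k+1)))
      rw [show a + (k+1) = a + k + 1 by omega]
      exact hstep (a+k) (by omega)
  have hchord : ∀ p q, p < m → q < m → R (f p) (f q) → q = (p+1) % m := by
    intro p q hpm hqm hpq
    by_contra hne
    have hpqne : p ≠ q := by
      intro h; rw [h] at hpq; exact hpq.1 rfl
    set J : ℕ := if q ≤ p then p - q else p + m - q with hJ
    have hJm : J < m - 1 := by
      rw [hJ]
      split
      · rcases Nat.lt_or_ge (p - q) (m-1) with h | h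
        · exact h
        · exfalso
          have hp' : p = m - 1 := by omega
          have hq' : q = 0 := by omega
          apply hne
          rw [hp', hq', show m - 1 + 1 = m by omega, Nat.mod_self]
      · rcases Nat.lt_or_ge (p + m - q) (m-1) with h | h
        · exact h
        · exfalso
          have hq' : q = p + 1 := by omega
          apply hne
          rw [hq', Nat.mod_eq_of_lt (by omega)]
    have hJmod : (q + J) % m = p := by
      rw [hJ]
      split
      · rw [show q + (p - q) = p by omega, Nat.mod_eq_of_lt hpm]
      · rw [show q + (p + m - q) = p + m by omega, Nat.add_mod_right, Nat.mod_eq_of_lt hpm]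
    apply hmin (J + 1) (by omega)
    refine ⟨by omega, fun k => if k = 0 then f p else f ((q + (k-1)) % m), ?_, ?_⟩
    · show (if (0:ℕ) = 0 then f p else f ((q + (0-1)) % m)) =
          (if J + 1 = 0 then f p else f ((q + (J+1-1)) % m))
      rw [if_pos rfl, if_neg (Nat.succ_ne_zero J), Nat.add_sub_cancel, hJmod]
    · intro k hk
      show R (if k = 0 then f p else f ((q + (k-1)) % m))
          (if k+1 = 0 then f p else f ((q + (k+1-1)) % m))
      rw [if_neg (Nat.succ_ne_zero k), Nat.add_sub_cancel]
      rcases Nat.eq_zero_or_pos k with h | h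
      · subst h
        rw [if_pos rfl, Nat.add_zero, Nat.mod_eq_of_lt hqm]
        exact hpq
      · rw [if_neg (by omega)]
        have h2 := hF (q + (k-1))
        rw [show q + (k-1) + 1 = q + k by omega] at h2
        exact h2
  have hchord' : ∀ p q, p < m → q < m → q = (p+1) % m → R (f p) (f q) := by
    intro p q hpm hqm hq
    rcases Nat.lt_or_ge (p+1) m with h | h
    · rw [hq, Nat.mod_eq_of_lt h]
      exact hstep p hpm
    · have hp1 : p + 1 = m := by omega
      rw [hq, hp1, Nat.mod_self]
      have h2 := hstep p hpm
      rw [hp1, ← hclose] at h2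
      exact h2
  obtain ⟨m', rfl⟩ : ∃ m', m = m' + 2 := ⟨m - 2, by omega⟩
  set s : Finset (Fin n) := Finset.image (fun k : Fin (m'+2) => f k.val) Finset.univ with hs
  have hmem : ∀ k : Fin (m'+2), f k.val ∈ s := fun k =>
    Finset.mem_image.mpr ⟨k, Finset.mem_univ k, rfl⟩
  set ψ : Fin (m'+2) → {x // x ∈ s} := fun k => ⟨f k.val, hmem k⟩ with hψ
  have hbij : Function.Bijective ψ := by
    constructor
    · intro a b hab
      have hab' : f a.val = f b.val := congrArg Subtype.val hab
      by_contra hne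
      have hvne : a.val ≠ b.val := fun h => hne (Fin.ext h)
      rcases Nat.lt_or_ge a.val b.val with h | h
      · exact hinj a.val b.val h b.isLt hab'
      · exact hinj b.val a.val (by omega) a.isLt hab'.symm
    · intro x
      obtain ⟨k, _, hk⟩ := Finset.mem_image.mp x.2
      exact ⟨k, Subtype.ext hk⟩
  set e : Fin (m'+2) ≃ {x // x ∈ s} := Equiv.ofBijective ψ hbij with he
  have hdet := Matrix.det_submatrix_equiv_self e
    (A.submatrix (fun i : s => (i : Fin n)) (fun j : s => (j : Fin n)))
  have hmat : (A.submatrix (fun i : s => (i : Fin n)) (fun j : s => (j : Fin n))).submatrix e e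
      = Matrix.of fun k l : Fin (m'+2) => if k = l ∨ l = k + 1 then (1:ℝ) else 0 := by
    ext k l
    simp only [Matrix.submatrix_apply, Matrix.of_apply, he, Equiv.ofBijective_apply, hψ]
    have hval1 : (l = k + 1) ↔ (l.val = (k.val + 1) % (m'+2)) := by
      rw [Fin.ext_iff, Fin.val_add, Fin.val_one]
    by_cases hkl : k = l
    · rw [if_pos (Or.inl hkl), hkl, hdiag]
    · by_cases hsucc : l = k + 1
      · rw [if_pos (Or.inr hsucc)]
        exact (hchord' k.val l.val k.isLt l.isLt (hval1.mp hsucc)).2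
      · rw [if_neg (by tauto)]
        rcases h01 (f k.val) (f l.val) with h | h
        · exact h
        · exfalso
          have hfne : f k.val ≠ f l.val := by
            have hvne : k.val ≠ l.val := fun hv => hkl (Fin.ext hv)
            rcases Nat.lt_or_ge k.val l.val with hlt | hge
            · exact hinj _ _ hlt l.isLt
            · exact fun he' => hinj _ _ (by omega) k.isLt he'.symm
          have h2 := hchord k.val l.val k.isLt l.isLt ⟨hfne, h⟩
          exact hsucc (hval1.mpr h2)
  rw [hmat, det_cycleMat] at hdet
  have hps : pminor A s = 1 := hp s
  rw [pminor] at hps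
  rw [hps] at hdet
  have hcontr : (-1:ℝ)^(m'+1) = 0 := by linarith
  exact pow_ne_zero _ (by norm_num : (-1:ℝ) ≠ 0) hcontr

lemma pminor_eq_one_of_acyclic {n : ℕ} (G : Fin n → Fin n → Bool) (hG : IsAcyclicDigraph G)
    (s : Finset (Fin n)) :
    pminor (Matrix.of fun i j => if i = j then (1:ℝ) else if G i j then 1 else 0) s = 1 := by
  apply det_eq_one_of_acyclic _
    (fun a b : s => Relation.TransGen (fun x y => G x y = true) (a : Fin n) (b : Fin n))
  · intro a b c hab hbc
    exact hab.trans hbc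
  · intro a
    exact hG a
  · intro a
    simp [Matrix.submatrix_apply]
  · intro a b hab hr
    have hne : (a : Fin n) ≠ (b : Fin n) := fun h => hab (Subtype.ext h)
    simp only [Matrix.submatrix_apply, Matrix.of_apply, if_neg hne]
    rw [if_neg]
    intro hGab
    exact hr (Relation.TransGen.single hGab)


theorem stmt_5 {n : ℕ} :
    Nat.card {A : Matrix (Fin n) (Fin n) ℝ //
        (∀ i j, A i j = 0 ∨ A i j = 1) ∧ ∀ s : Finset (Fin n), pminor A s = 1} =
    Nat.card {G : Fin n → Fin n → Bool //
        (∀ i, G i i = false) ∧ IsAcyclicDigraph G} := by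
  classical
  apply Nat.card_congr
  refine ⟨fun A => ⟨fun i j => if i ≠ j ∧ A.1 i j = 1 then true else false, ?_, ?_⟩,
    fun G => ⟨Matrix.of fun i j => if i = j then (1:ℝ) else if G.1 i j then 1 else 0, ?_, ?_⟩,
    ?_, ?_⟩
  · intro i
    simp
  · -- acyclicity
    intro i hcyc
    apply no_cycle_of_pminors A.1 A.2.1 A.2.2 (i := i)
    have hrel : (fun a b => (if a ≠ b ∧ A.1 a b = 1 then true else false) = true)
        = fun a b : Fin n => a ≠ b ∧ A.1 a b = 1 := by
      funext a b
      simp only [eq_iff_iff]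
      constructor
      · intro h
        by_contra hc
        rw [if_neg hc] at h
        exact Bool.false_ne_true h
      · intro h
        rw [if_pos h]
    rw [hrel] at hcyc
    exact hcyc
  · -- entries 0/1
    intro i j
    by_cases h : i = j
    · simp [h]
    · simp only [Matrix.of_apply, if_neg h]
      by_cases hG : G.1 i j <;> simp [hG]
  · exact pminor_eq_one_of_acyclic G.1 G.2.2
  · -- left inverse
    rintro ⟨A, h01, hps⟩
    apply Subtype.ext
    ext i j
    simp only [Matrix.of_apply]
    by_cases h : i = j
    · rw [if_pos h, h, ← pminor_singleton_s5 A j, hps]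
    · rw [if_neg h]
      rcases h01 i j with h0 | h1
      · have hcond : ¬ (i ≠ j ∧ A i j = 1) := fun hc => by
          rw [hc.2] at h0; norm_num at h0
        simp [if_neg hcond, h0]
      · simp [if_pos (⟨h, h1⟩ : i ≠ j ∧ A i j = 1), h1, h]
  · -- right inverse
    rintro ⟨G, hloop, hacyc⟩
    apply Subtype.ext
    funext i j
    simp only []
    by_cases h : i = j
    · rw [if_neg]
      · rw [h, hloop j]
      · intro hc
        exact hc.1 h
    · simp only [Matrix.of_apply, if_neg h]
      by_cases hG : G i j
      · simp [hG, h]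
      · simp only [Bool.not_eq_true] at hG
        simp [hG, h]
end

section
/- An n×n real matrix A with entries in {0,1} has all eigenvalues positive (real) if and only if all principal minors of A are equal to 1. -/
open Matrix

section Aux

open Polynomial

variable {m k R : Type*} [Fintype m] [DecidableEq m] [Fintype k] [DecidableEq k] [CommRing R]

private lemma det_piecewise (M : Matrix m m R) (s : Finset m) :
    (Matrix.of (s.piecewise M (1 : Matrix m m R))).det = pminor M s := by
  classical
  let e := (Equiv.sumCompl (· ∈ s)).symm
  rw [← Matrix.det_submatrix_equiv_self e.symm]
  have : (Matrix.of (s.piecewise M (1 : Matrix m m R))).submatrix e.symm e.symm =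
      Matrix.fromBlocks (M.submatrix (fun i : s => (i : m)) (fun j : s => (j : m)))
        (M.submatrix (fun i : s => (i : m)) (fun j : {x // x ∉ s} => (j : m)))
        0 (1 : Matrix {x // x ∉ s} {x // x ∉ s} R) := by
    ext i j
    rcases i with i | i <;> rcases j with j | j <;>
      simp only [e, Matrix.submatrix_apply, Equiv.symm_symm, Equiv.sumCompl_apply_inl,
        Equiv.sumCompl_apply_inr, Matrix.of_apply, Matrix.fromBlocks_apply₁₁,
        Matrix.fromBlocks_apply₁₂, Matrix.fromBlocks_apply₂₁, Matrix.fromBlocks_apply₂₂,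
        Matrix.zero_apply]
    · simp only [Finset.piecewise, i.2, if_true]
    · simp only [Finset.piecewise, i.2, if_true]
    · simp only [Finset.piecewise, i.2, if_false]
      rw [Matrix.one_apply, if_neg]
      exact fun h => i.2 (h ▸ j.2)
    · simp only [Finset.piecewise, i.2, if_false]
      rw [Matrix.one_apply, Matrix.one_apply]
      simp [Subtype.ext_iff]
  rw [this, Matrix.det_fromBlocks_zero₂₁, Matrix.det_one, mul_one, pminor]

private lemma det_one_add' (M : Matrix m m R) :
    (1 + M).det = ∑ s : Finset m, pminor M s := by
  classical
  have h := (Matrix.detRowAlternating (R := R) (n := m)).toMultilinearMap.map_add_univ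
      (fun i => M i) (fun i => (1 : Matrix m m R) i)
  have e2 : (1 + M).det = Matrix.detRowAlternating
      ((fun i => M i) + fun i => (1 : Matrix m m R) i) := by
    rw [add_comm]
    rfl
  rw [e2]
  exact h.trans (Finset.sum_congr rfl fun s _ => det_piecewise M s)

private lemma pminor_empty (M : Matrix m m R) : pminor M (∅ : Finset m) = 1 := by
  have : IsEmpty ((∅ : Finset m) : Finset m) := by simp; exact ⟨fun x => x.2⟩
  exact Matrix.det_isEmpty

private lemma pminor_map_emb (M : Matrix k k R) (f : m ↪ k) (t : Finset m) :
    pminor (M.submatrix f f) t = pminor M (t.map f) := by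
  classical
  unfold pminor
  have hbij : Function.Bijective
      (fun x : t => (⟨f x, Finset.mem_map_of_mem f x.2⟩ : (t.map f : Finset k))) := by
    constructor
    · intro a b h
      ext
      exact f.injective (congrArg Subtype.val h)
    · rintro ⟨y, hy⟩
      rw [Finset.mem_map] at hy
      obtain ⟨x, hx, rfl⟩ := hy
      exact ⟨⟨x, hx⟩, rfl⟩
  let e := Equiv.ofBijective _ hbij
  rw [← Matrix.det_submatrix_equiv_self e]
  rfl

private lemma pminor_smul (M : Matrix m m R) (c : R) (s : Finset m) :
    pminor (c • M) s = c ^ s.card * pminor M s := by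
  unfold pminor
  have : (c • M).submatrix (fun i : s => (i : m)) (fun j : s => (j : m)) =
      c • M.submatrix (fun i : s => (i : m)) (fun j : s => (j : m)) := rfl
  rw [this, Matrix.det_smul, Fintype.card_coe]

private lemma charpoly_eval (M : Matrix m m ℂ) (z : ℂ) :
    M.charpoly.eval z = (Matrix.scalar m z - M).det := by
  rw [Matrix.charpoly, _root_.eval_det, matPolyEquiv_charmatrix]
  simp

private lemma mem_spectrum_iff_eval (M : Matrix m m ℂ) (z : ℂ) :
    z ∈ spectrum ℂ M ↔ M.charpoly.eval z = 0 := by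
  rw [spectrum.mem_iff, charpoly_eval]
  rw [Matrix.isUnit_iff_isUnit_det, isUnit_iff_ne_zero, not_not]
  rw [Matrix.scalar_apply, Matrix.algebraMap_eq_diagonal]
  rfl

private lemma multiset_log_prod (M : Multiset ℝ) (h : ∀ r ∈ M, 0 < r) :
    Real.log M.prod = (M.map Real.log).sum := by
  induction M using Multiset.induction_on with
  | empty => simp
  | cons a M ih =>
    rw [Multiset.prod_cons, Multiset.map_cons, Multiset.sum_cons,
      Real.log_mul (ne_of_gt (h a (Multiset.mem_cons_self a M)))
        (ne_of_gt (Multiset.prod_pos fun r hr => h r (Multiset.mem_cons_of_mem hr))),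
      ih fun r hr => h r (Multiset.mem_cons_of_mem hr)]

private lemma multiset_sum_sub_one (M : Multiset ℝ) :
    (M.map (fun r => r - 1)).sum = M.sum - M.card := by
  induction M using Multiset.induction_on with
  | empty => simp
  | cons a M ih =>
    rw [Multiset.map_cons, Multiset.sum_cons, Multiset.sum_cons, Multiset.card_cons, ih]
    push_cast
    ring

private lemma multiset_sum_map_le (M : Multiset ℝ) (f g : ℝ → ℝ) (h : ∀ r ∈ M, f r ≤ g r) :
    (M.map f).sum ≤ (M.map g).sum := by
  induction M using Multiset.induction_on with
  | empty => simp
  | cons a M ih =>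
    rw [Multiset.map_cons, Multiset.sum_cons, Multiset.map_cons, Multiset.sum_cons]
    exact add_le_add (h a (Multiset.mem_cons_self a M))
      (ih fun r hr => h r (Multiset.mem_cons_of_mem hr))

private lemma multiset_all_one (M : Multiset ℝ) (hpos : ∀ r ∈ M, 0 < r)
    (hsum : M.sum ≤ M.card) (hprod : 1 ≤ M.prod) : ∀ r ∈ M, r = 1 := by
  by_contra hc
  push_neg at hc
  obtain ⟨r0, hr0M, hr0⟩ := hc
  obtain ⟨M', rfl⟩ := Multiset.exists_cons_of_mem hr0M
  have h1 : (0 : ℝ) ≤ Real.log (r0 ::ₘ M').prod := Real.log_nonneg hprod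
  rw [multiset_log_prod _ hpos, Multiset.map_cons, Multiset.sum_cons] at h1
  have h2 : (M'.map Real.log).sum ≤ (M'.map (fun r => r - 1)).sum :=
    multiset_sum_map_le _ _ _ fun r hr =>
      Real.log_le_sub_one_of_pos (hpos r (Multiset.mem_cons_of_mem hr))
  have h3 : Real.log r0 < r0 - 1 :=
    Real.log_lt_sub_one_of_pos (hpos r0 hr0M) hr0
  have h4 : Real.log r0 + (M'.map Real.log).sum < ((r0 ::ₘ M').map (fun r => r - 1)).sum := by
    rw [Multiset.map_cons, Multiset.sum_cons]
    exact add_lt_add_of_lt_of_le h3 h2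
  rw [multiset_sum_sub_one] at h4
  linarith

private lemma pow_entry_nonneg (N : Matrix m m ℝ) (hN : ∀ i j, 0 ≤ N i j) (k : ℕ) :
    ∀ i j, 0 ≤ (N ^ k) i j := by
  induction k with
  | zero =>
    intro i j
    rw [pow_zero, Matrix.one_apply]
    split <;> norm_num
  | succ k ih =>
    intro i j
    rw [pow_succ, Matrix.mul_apply]
    exact Finset.sum_nonneg fun l _ => mul_nonneg (ih i l) (hN l j)

private lemma pow_submatrix_le {n : ℕ} (N : Matrix (Fin n) (Fin n) ℝ) (hN : ∀ i j, 0 ≤ N i j)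
    (f : m → Fin n) (hf : Function.Injective f) (k : ℕ) :
    ∀ i j, ((N.submatrix f f) ^ k) i j ≤ (N ^ k) (f i) (f j) := by
  have hsub : ∀ i j, 0 ≤ N.submatrix f f i j := fun i j => hN _ _
  induction k with
  | zero =>
    intro i j
    rw [pow_zero, pow_zero, Matrix.one_apply, Matrix.one_apply]
    by_cases h : i = j
    · simp [h]
    · rw [if_neg h, if_neg fun hc => h (hf hc)]
  | succ k ih =>
    intro i j
    rw [pow_succ, pow_succ, Matrix.mul_apply, Matrix.mul_apply]
    have step1 : ∑ l : m, ((N.submatrix f f) ^ k) i l * (N.submatrix f f) l j ≤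
        ∑ l : m, (N ^ k) (f i) (f l) * N (f l) (f j) :=
      Finset.sum_le_sum fun l _ => mul_le_mul_of_nonneg (ih i l) le_rfl
        (pow_entry_nonneg _ hsub k i l) (hN _ _) |>.trans
        (mul_le_mul_of_nonneg_left le_rfl (pow_entry_nonneg N hN k (f i) (f l)))
    refine step1.trans ?_
    rw [show ∑ l : m, (N ^ k) (f i) (f l) * N (f l) (f j)
        = ∑ u ∈ Finset.univ.image f, (N ^ k) (f i) u * N u (f j) from
      (Finset.sum_image (g := f) (f := fun u => (N ^ k) (f i) u * N u (f j))
        (fun x _ y _ h => hf h)).symm]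
    exact Finset.sum_le_sum_of_subset_of_nonneg (Finset.subset_univ _)
      fun u _ _ => mul_nonneg (pow_entry_nonneg N hN k (f i) u) (hN u (f j))

private lemma pminor_one_add (B : Matrix m m R) (s : Finset m) :
    pminor (1 + B) s =
      ∑ t : Finset {x // x ∈ s}, pminor B (t.map (Function.Embedding.subtype (· ∈ s))) := by
  have h1 : (1 + B).submatrix (fun i : s => (i : m)) (fun j : s => (j : m)) =
      1 + B.submatrix (fun i : s => (i : m)) (fun j : s => (j : m)) := by
    ext i j
    simp only [Matrix.submatrix_apply, Matrix.add_apply, Matrix.one_apply, Subtype.ext_iff]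
  show ((1 + B).submatrix _ _).det = _
  rw [h1, det_one_add']
  exact Finset.sum_congr rfl fun t _ =>
    pminor_map_emb B (Function.Embedding.subtype (· ∈ s)) t

private lemma pminor_eq_zero_of_nilpotent {n : ℕ} (N : Matrix (Fin n) (Fin n) ℝ)
    (hpos : ∀ i j, 0 ≤ N i j) (hnil : N ^ n = 0) (u : Finset (Fin n)) (hu : u.Nonempty) :
    pminor N u = 0 := by
  obtain ⟨x, hx⟩ := hu
  have hne : n ≠ 0 := fun h => (h ▸ x).elim0
  set f : {y // y ∈ u} → Fin n := fun i => (i : Fin n) with hf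
  have hfinj : Function.Injective f := Subtype.coe_injective
  have hsubpos : ∀ i j, 0 ≤ N.submatrix f f i j := fun i j => hpos _ _
  have hz : (N.submatrix f f) ^ n = 0 := by
    ext i j
    refine le_antisymm ?_ (pow_entry_nonneg _ hsubpos n i j)
    have := pow_submatrix_le N hpos f hfinj n i j
    rwa [hnil, Matrix.zero_apply] at this
  have hdet : (N.submatrix f f).det ^ n = 0 := by
    rw [← Matrix.det_pow, hz, @Matrix.det_zero _ _ _ _ _ ⟨⟨x, hx⟩⟩]
  exact pow_eq_zero_iff hne |>.mp hdet

private lemma pminors_of_unipotent {n : ℕ} (N : Matrix (Fin n) (Fin n) ℝ)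
    (hpos : ∀ i j, 0 ≤ N i j) (hnil : N ^ n = 0) (s : Finset (Fin n)) :
    pminor (1 + N) s = 1 := by
  rw [pminor_one_add]
  rw [Finset.sum_eq_single (∅ : Finset {x // x ∈ s})]
  · rw [Finset.map_empty, pminor_empty]
  · intro t _ ht
    refine pminor_eq_zero_of_nilpotent N hpos hnil _ ?_
    exact Finset.map_nonempty.mpr (Finset.nonempty_iff_ne_empty.mpr ht)
  · intro h
    exact absurd (Finset.mem_univ _) h

private lemma pminor_vanish {n : ℕ} (A : Matrix (Fin n) (Fin n) ℝ) (h : ∀ s, pminor A s = 1) :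
    ∀ s : Finset (Fin n), s.Nonempty → pminor (A - 1) s = 0 := by
  intro s
  induction s using Finset.strongInduction with
  | _ s ih =>
    intro hs
    obtain ⟨x, hx⟩ := hs
    have hA : (1 : Matrix (Fin n) (Fin n) ℝ) + (A - 1) = A := by abel
    set N : Matrix (Fin n) (Fin n) ℝ := A - 1 with hN
    set f : Finset {y // y ∈ s} → ℝ :=
      fun t => pminor N (t.map (Function.Embedding.subtype (· ∈ s))) with hfdef
    have hexp : (1 : ℝ) = ∑ t : Finset {y // y ∈ s}, f t := by
      rw [← h s, ← hA, pminor_one_add]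
    have hEmptyNeUniv : (∅ : Finset {y // y ∈ s}) ≠ Finset.univ := by
      intro hEq
      have := Finset.mem_univ (⟨x, hx⟩ : {y // y ∈ s})
      rw [← hEq] at this
      exact absurd this (Finset.notMem_empty _)
    have hmemerase : (Finset.univ : Finset {y // y ∈ s}) ∈
        (Finset.univ : Finset (Finset {y // y ∈ s})).erase ∅ :=
      Finset.mem_erase.mpr ⟨hEmptyNeUniv.symm, Finset.mem_univ _⟩
    rw [← Finset.add_sum_erase _ f (Finset.mem_univ (∅ : Finset {y // y ∈ s})),
      ← Finset.add_sum_erase _ f hmemerase] at hexp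
    have hzero : ∑ t ∈ ((Finset.univ : Finset (Finset {y // y ∈ s})).erase ∅).erase
        Finset.univ, f t = 0 := by
      refine Finset.sum_eq_zero fun t ht => ?_
      have htu : t ≠ Finset.univ := (Finset.mem_erase.mp ht).1
      have hte : t ≠ ∅ := (Finset.mem_erase.mp (Finset.mem_erase.mp ht).2).1
      have hsubset : t.map (Function.Embedding.subtype (· ∈ s)) ⊆ s := by
        intro y hy
        rw [Finset.mem_map] at hy
        obtain ⟨z, _, rfl⟩ := hy
        exact z.2
      have hproper : t.map (Function.Embedding.subtype (· ∈ s)) ⊂ s := by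
        refine Finset.ssubset_iff_subset_ne.mpr ⟨hsubset, fun hEq => htu ?_⟩
        have hcard : t.card = s.card := by rw [← Finset.card_map, hEq]
        exact Finset.eq_univ_of_card t (by rw [hcard, Fintype.card_coe])
      exact ih _ hproper (Finset.map_nonempty.mpr (Finset.nonempty_iff_ne_empty.mpr hte))
    have hfempty : f ∅ = 1 := by
      rw [hfdef]; simp only [Finset.map_empty]; exact pminor_empty N
    have husm : (Finset.univ : Finset {y // y ∈ s}).map
        (Function.Embedding.subtype (· ∈ s)) = s := by
      rw [Finset.univ_eq_attach]
      exact Finset.attach_map_val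
    have hfuniv : f Finset.univ = pminor N s := by
      simp only [hfdef]
      rw [husm]
    rw [hzero, hfempty, hfuniv] at hexp
    linarith

end Aux

open Polynomial in
theorem stmt_6 {n : ℕ} (A : Matrix (Fin n) (Fin n) ℝ)
    (h01 : ∀ i j, A i j = 0 ∨ A i j = 1) :
    (∀ z ∈ spectrum ℂ (A.map (Complex.ofReal)), z.im = 0 ∧ 0 < z.re) ↔
      (∀ s : Finset (Fin n), pminor A s = 1) := by
  constructor
  · -- forward
    intro hspec s
    set Aℂ := A.map (Complex.ofReal) with hAC
    have hmonic : Aℂ.charpoly.Monic := Matrix.charpoly_monic _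
    have hsplits : Aℂ.charpoly.Splits := IsAlgClosed.splits _
    have hdeg : Aℂ.charpoly.natDegree = n := by
      rw [Matrix.charpoly_natDegree_eq_dim, Fintype.card_fin]
    have hcard : Aℂ.charpoly.roots.card = n := by
      rw [(Polynomial.splits_iff_card_roots).mp hsplits, hdeg]
    have hroot : ∀ z ∈ Aℂ.charpoly.roots, z.im = 0 ∧ 0 < z.re := fun z hz =>
      hspec z ((mem_spectrum_iff_eval _ _).mpr ((Polynomial.mem_roots').mp hz).2)
    set Mr := Aℂ.charpoly.roots.map Complex.re with hMr
    have hMreq : Aℂ.charpoly.roots.map (fun z => (Complex.ofReal z.re)) =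
        Aℂ.charpoly.roots := by
      refine (Multiset.map_congr rfl fun z hz => ?_).trans (Multiset.map_id _)
      have := (hroot z hz).1
      apply Complex.ext <;> simp [this]
    have hsum : (Complex.ofReal Mr.sum) = Aℂ.charpoly.roots.sum := by
      rw [hMr]
      rw [show (Complex.ofReal (Aℂ.charpoly.roots.map Complex.re).sum) =
          ((Aℂ.charpoly.roots.map Complex.re).map Complex.ofReal).sum from
        (map_multiset_sum Complex.ofRealHom _).symm ▸ rfl]
      rw [Multiset.map_map]
      exact congrArg Multiset.sum hMreq
    have hprod : (Complex.ofReal Mr.prod) = Aℂ.charpoly.roots.prod := by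
      rw [hMr]
      rw [show (Complex.ofReal (Aℂ.charpoly.roots.map Complex.re).prod) =
          ((Aℂ.charpoly.roots.map Complex.re).map Complex.ofReal).prod from
        (map_multiset_prod Complex.ofRealHom _).symm ▸ rfl]
      rw [Multiset.map_map]
      exact congrArg Multiset.prod hMreq
    have htr : Aℂ.trace = Complex.ofReal A.trace := by
      rw [hAC]
      simp only [Matrix.trace, Matrix.diag, Matrix.map_apply]
      exact (map_sum Complex.ofRealHom _ _).symm
    have hdet : Aℂ.det = Complex.ofReal A.det := by
      rw [hAC]
      exact (RingHom.map_det Complex.ofRealHom A).symm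
    have htr2 : A.trace = Mr.sum := by
      have h' : Complex.ofReal A.trace = Complex.ofReal Mr.sum := by
        rw [← htr, Matrix.trace_eq_sum_roots_charpoly, ← hsum]
      exact_mod_cast h'
    have hdet2 : A.det = Mr.prod := by
      have h' : Complex.ofReal A.det = Complex.ofReal Mr.prod := by
        rw [← hdet, Matrix.det_eq_prod_roots_charpoly, ← hprod]
      exact_mod_cast h'
    have hMrpos : ∀ r ∈ Mr, 0 < r := by
      intro r hr
      rw [hMr, Multiset.mem_map] at hr
      obtain ⟨z, hz, rfl⟩ := hr
      exact (hroot z hz).2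
    -- integrality of the determinant
    set B : Matrix (Fin n) (Fin n) ℤ := Matrix.of fun i j => if A i j = 1 then 1 else 0 with hB
    have hAB : A = B.map (fun x : ℤ => (x : ℝ)) := by
      ext i j
      rcases h01 i j with h' | h' <;> simp [hB, Matrix.map_apply, h']
    have hdetB : A.det = ((B.det : ℤ) : ℝ) := by
      rw [hAB]
      exact (RingHom.map_det (Int.castRingHom ℝ) B).symm
    have hdetpos : 0 < A.det := by
      rw [hdet2]
      exact Multiset.prod_pos hMrpos
    have hdet1 : 1 ≤ A.det := by
      rw [hdetB]
      have : 0 < B.det := by exact_mod_cast hdetB ▸ hdetpos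
      exact_mod_cast this
    have htrle : A.trace ≤ (n : ℝ) := by
      have : A.trace = ∑ i, A i i := rfl
      rw [this]
      calc ∑ i, A i i ≤ ∑ _i : Fin n, (1 : ℝ) :=
            Finset.sum_le_sum fun i _ => by rcases h01 i i with h' | h' <;> simp [h']
        _ = n := by simp
    have hMrcard : Mr.card = n := by rw [hMr, Multiset.card_map, hcard]
    have hall1 : ∀ r ∈ Mr, r = 1 :=
      multiset_all_one Mr hMrpos (by rw [hMrcard, ← htr2]; exact htrle) (hdet2 ▸ hdet1)
    have hroots1 : ∀ z ∈ Aℂ.charpoly.roots, z = 1 := by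
      intro z hz
      have h1 : z.re = 1 := hall1 z.re (by rw [hMr]; exact Multiset.mem_map_of_mem _ hz)
      have h2 := (hroot z hz).1
      apply Complex.ext <;> simp [h1, h2]
    have hq : Aℂ.charpoly = (X - C 1) ^ n := by
      have heq := hsplits.eq_prod_roots_of_monic hmonic
      rw [heq]
      have : Aℂ.charpoly.roots.map (fun a => X - C a) =
          Multiset.replicate n (X - C (1 : ℂ)) := by
        refine Multiset.eq_replicate.mpr ⟨by rw [Multiset.card_map, hcard], ?_⟩
        intro p hp
        rw [Multiset.mem_map] at hp
        obtain ⟨a, ha, rfl⟩ := hp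
        rw [hroots1 a ha]
      rw [this, Multiset.prod_replicate]
    have hR : A.charpoly = (X - C 1) ^ n := by
      have hmap : A.charpoly.map Complex.ofRealHom = Aℂ.charpoly :=
        (Matrix.charpoly_map A Complex.ofRealHom).symm
      apply Polynomial.map_injective Complex.ofRealHom Complex.ofReal_injective
      rw [hmap, hq]
      simp [Polynomial.map_pow, Polynomial.map_sub, Polynomial.map_X, Polynomial.map_C]
    have hnil : (A - 1) ^ n = 0 := by
      have hCH := Matrix.aeval_self_charpoly A
      rw [hR] at hCH
      simpa [map_pow, map_sub, Polynomial.aeval_X, _root_.map_one] using hCH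
    have hsumdiag : ∑ i, A i i = (n : ℝ) := by
      have hMrrep : Mr = Multiset.replicate n (1 : ℝ) :=
        Multiset.eq_replicate.mpr ⟨hMrcard, hall1⟩
      have : A.trace = (n : ℝ) := by
        rw [htr2, hMrrep, Multiset.sum_replicate]
        simp
      exact this
    have hdiag : ∀ i, A i i = 1 := by
      by_contra hcon
      push_neg at hcon
      obtain ⟨i0, hi0⟩ := hcon
      have hstrict : ∑ i, A i i < ∑ _i : Fin n, (1 : ℝ) := by
        refine Finset.sum_lt_sum (fun i _ => ?_) ⟨i0, Finset.mem_univ i0, ?_⟩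
        · rcases h01 i i with h' | h' <;> simp [h']
        · rcases h01 i0 i0 with h' | h'
          · rw [h']; norm_num
          · exact absurd h' hi0
      rw [hsumdiag] at hstrict
      simp at hstrict
    have hNpos : ∀ i j, 0 ≤ (A - 1) i j := by
      intro i j
      by_cases hij : i = j
      · subst hij
        rw [Matrix.sub_apply, Matrix.one_apply_eq, hdiag i]
        norm_num
      · rw [Matrix.sub_apply, Matrix.one_apply_ne hij, sub_zero]
        rcases h01 i j with h' | h' <;> simp [h']
    have : A = 1 + (A - 1) := by abel
    rw [this]
    exact pminors_of_unipotent _ hNpos hnil s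
  · intro h z hz
    by_cases hz1 : z = 1
    · subst hz1
      constructor <;> simp
    exfalso
    set N : Matrix (Fin n) (Fin n) ℝ := A - 1 with hN
    have hvan := pminor_vanish A h
    set NC : Matrix (Fin n) (Fin n) ℂ := N.map Complex.ofReal with hNC
    have hpmNC : ∀ t : Finset (Fin n), t.Nonempty → pminor NC t = 0 := by
      intro t ht
      have : pminor NC t = Complex.ofReal (pminor N t) := by
        unfold pminor
        rw [hNC, Matrix.submatrix_map]
        exact (RingHom.map_det Complex.ofRealHom _).symm
      rw [this, hvan t ht, Complex.ofReal_zero]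
    have hspec' := (mem_spectrum_iff_eval _ z).mp hz
    rw [charpoly_eval] at hspec'
    set w := z - 1 with hwdef
    have hw : w ≠ 0 := sub_ne_zero.mpr hz1
    have hA1 : A.map Complex.ofReal = 1 + NC := by
      ext i j
      by_cases hij : i = j
      · subst hij
        simp only [Matrix.map_apply, Matrix.add_apply, Matrix.one_apply_eq, hNC, hN,
          Matrix.sub_apply]
        push_cast
        ring
      · simp only [Matrix.map_apply, Matrix.add_apply, Matrix.one_apply_ne hij, hNC, hN,
          Matrix.sub_apply]
        push_cast
        ring
    have hscalar : Matrix.scalar (Fin n) z = z • (1 : Matrix (Fin n) (Fin n) ℂ) := by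
      ext i j
      simp only [Matrix.scalar_apply, Matrix.diagonal, Matrix.smul_apply, Matrix.one_apply,
        Matrix.of_apply, smul_eq_mul]
      split <;> simp
    have hkey : Matrix.scalar (Fin n) z - A.map Complex.ofReal = w • (1 + (-w⁻¹) • NC) := by
      rw [hscalar, hA1, smul_add, smul_smul, mul_neg, mul_inv_cancel₀ hw, neg_smul, one_smul,
        hwdef, sub_smul, one_smul]
      abel
    have hdetval : (Matrix.scalar (Fin n) z - A.map Complex.ofReal).det = w ^ n := by
      rw [hkey, Matrix.det_smul, det_one_add', Finset.sum_eq_single (∅ : Finset (Fin n))]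
      · rw [pminor_smul, pminor_empty, Finset.card_empty, pow_zero, one_mul, mul_one,
          Fintype.card_fin]
      · intro t _ ht
        rw [pminor_smul, hpmNC t (Finset.nonempty_iff_ne_empty.mpr ht), mul_zero]
      · intro hmem
        exact absurd (Finset.mem_univ _) hmem
    rw [hdetval] at hspec'
    obtain ⟨hw0, -⟩ := pow_eq_zero_iff'.mp hspec'
    exact hw hw0
end

section
/- Let Rₙ denote the number of acyclic digraphs on n labeled vertices, with R₀ = 1. Then for n ≥ 1, Rₙ = Σ_{k=1}^{n} (−1)^{k+1} C(n,k) 2^{k(n−k)} R_{n−k}. -/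
open Matrix

/-- The number of acyclic digraphs on `n` labeled vertices. -/
noncomputable def numAcyclic (n : ℕ) : ℕ :=
  Nat.card {G : Fin n → Fin n → Bool // (∀ i, G i i = false) ∧ IsAcyclicDigraph G}

private lemma exists_source_s7 {n : ℕ} (hn : 1 ≤ n) (G : Fin n → Fin n → Bool)
    (hG : IsAcyclicDigraph G) : ∃ j, ∀ i, G i j = false := by
  set r : Fin n → Fin n → Prop := Relation.TransGen (fun a b => G a b = true) with hr
  haveI : IsTrans (Fin n) r := ⟨fun _ _ _ => Relation.TransGen.trans⟩
  haveI : IsIrrefl (Fin n) r := ⟨fun a => hG a⟩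
  have wf := Finite.wellFounded_of_trans_of_irrefl r
  obtain ⟨j, -, hmin⟩ := wf.has_min Set.univ ⟨⟨0, hn⟩, trivial⟩
  refine ⟨j, fun i => ?_⟩
  by_contra h
  exact hmin i trivial (Relation.TransGen.single (by simpa using h))

private def glue {n : ℕ} (S : Finset (Fin n)) (e : ↥(Sᶜ) ≃ Fin (n - S.card))
    (E : ↥S → ↥(Sᶜ) → Bool) (H : Fin (n - S.card) → Fin (n - S.card) → Bool) :
    Fin n → Fin n → Bool := fun i j =>
  if hj : j ∈ S then false
  else if hi : i ∈ S then E ⟨i, hi⟩ ⟨j, Finset.mem_compl.mpr hj⟩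
  else H (e ⟨i, Finset.mem_compl.mpr hi⟩) (e ⟨j, Finset.mem_compl.mpr hj⟩)

private lemma glue_acyclic {n : ℕ} (S : Finset (Fin n)) (e : ↥(Sᶜ) ≃ Fin (n - S.card))
    (E : ↥S → ↥(Sᶜ) → Bool) (H : Fin (n - S.card) → Fin (n - S.card) → Bool)
    (hH : IsAcyclicDigraph H) : IsAcyclicDigraph (glue S e E H) := by
  intro i hcyc
  have edge : ∀ x y : Fin n, glue S e E H x y = true → y ∉ S := by
    intro x y h hy
    simp only [glue, dif_pos hy] at h; exact absurd h (by simp)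
  have key : ∀ x y : Fin n, Relation.TransGen (fun a b => glue S e E H a b = true) x y →
      ∀ hx : x ∈ Sᶜ, ∃ hy : y ∈ Sᶜ,
        Relation.TransGen (fun a b => H a b = true) (e ⟨x, hx⟩) (e ⟨y, hy⟩) := by
    intro x y h
    induction h with
    | single h =>
      intro hx
      have hy : _ ∈ Sᶜ := Finset.mem_compl.mpr (edge _ _ h)
      refine ⟨hy, Relation.TransGen.single ?_⟩
      simpa only [glue, dif_neg (Finset.mem_compl.mp hy), dif_neg (Finset.mem_compl.mp hx)] using h
    | tail h₁ h ih =>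
      intro hx
      obtain ⟨hb, t⟩ := ih hx
      have hy : _ ∈ Sᶜ := Finset.mem_compl.mpr (edge _ _ h)
      refine ⟨hy, Relation.TransGen.tail t ?_⟩
      simpa only [glue, dif_neg (Finset.mem_compl.mp hy), dif_neg (Finset.mem_compl.mp hb)] using h
  have hi : i ∈ Sᶜ := by
    cases hcyc with
    | single h => exact Finset.mem_compl.mpr (edge _ _ h)
    | tail _ h => exact Finset.mem_compl.mpr (edge _ _ h)
  obtain ⟨hy, t⟩ := key i i hcyc hi
  exact hH _ t

private lemma card_sources {n : ℕ} (S : Finset (Fin n)) :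
    Nat.card {G : Fin n → Fin n → Bool //
        ((∀ i, G i i = false) ∧ IsAcyclicDigraph G) ∧ ∀ i j, j ∈ S → G i j = false} =
      2 ^ (S.card * (n - S.card)) * numAcyclic (n - S.card) := by
  classical
  have hc : (Sᶜ).card = n - S.card := by
    simp [Finset.card_compl]
  let e : ↥(Sᶜ) ≃ Fin (n - S.card) := (Sᶜ).equivFin.trans (finCongr hc)
  let ψ : Fin (n - S.card) → Fin n := fun a => ((e.symm a : ↥(Sᶜ)) : Fin n)
  have hψ : ∀ a, ψ a ∉ S := fun a => Finset.mem_compl.mp (e.symm a).2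
  have hψe : ∀ (x : Fin n) (hx : x ∈ Sᶜ), ψ (e ⟨x, hx⟩) = x := by
    intro x hx; simp [ψ]
  let F : {G : Fin n → Fin n → Bool //
        ((∀ i, G i i = false) ∧ IsAcyclicDigraph G) ∧ ∀ i j, j ∈ S → G i j = false} ≃
      ((↥S → ↥(Sᶜ) → Bool) ×
        {H : Fin (n - S.card) → Fin (n - S.card) → Bool //
          (∀ i, H i i = false) ∧ IsAcyclicDigraph H}) :=
  { toFun := fun G =>
      ⟨fun i j => G.1 i j,
       ⟨fun a b => G.1 (ψ a) (ψ b),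
        fun a => G.2.1.1 _,
        fun a hcyc => G.2.1.2 (ψ a)
          (Relation.TransGen.lift ψ (fun _ _ h => h) _ _ hcyc)⟩⟩
    invFun := fun p =>
      ⟨glue S e p.1 p.2.1,
       ⟨⟨fun i => by
          by_cases hi : i ∈ S
          · simp [glue, hi]
          · simp [glue, hi, p.2.2.1],
         glue_acyclic S e p.1 p.2.1 p.2.2.2⟩,
        fun i j hj => by simp [glue, hj]⟩⟩
    left_inv := fun G => by
      apply Subtype.ext
      funext i j
      by_cases hj : j ∈ S
      · simp only [glue, dif_pos hj]
        exact (G.2.2 i j hj).symm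
      · by_cases hi : i ∈ S
        · simp only [glue, dif_neg hj, dif_pos hi]
        · simp only [glue, dif_neg hj, dif_neg hi]
          rw [hψe i (Finset.mem_compl.mpr hi), hψe j (Finset.mem_compl.mpr hj)]
    right_inv := fun p => by
      refine Prod.ext ?_ ?_
      · funext i j
        simp only [glue, dif_neg (Finset.mem_compl.mp j.2), dif_pos i.2]
      · apply Subtype.ext
        funext a b
        simp only [glue, dif_neg (hψ b), dif_neg (hψ a)]
        have h1 : ∀ c : Fin (n - S.card), e ⟨ψ c, Finset.mem_compl.mpr (hψ c)⟩ = c := by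
          intro c
          have h2 : (⟨ψ c, Finset.mem_compl.mpr (hψ c)⟩ : ↥(Sᶜ)) = e.symm c := Subtype.ext rfl
          rw [h2, e.apply_symm_apply]
        rw [h1 a, h1 b] }
  rw [Nat.card_congr F, Nat.card_prod, Nat.card_fun, Nat.card_fun, numAcyclic]
  rw [Nat.card_eq_fintype_card (α := ↥S), Fintype.card_coe,
    Nat.card_eq_fintype_card (α := ↥(Sᶜ)), Fintype.card_coe, hc,
    Nat.card_eq_fintype_card (α := Bool), Fintype.card_bool]
  rw [← pow_mul, Nat.mul_comm (n - S.card)]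

open Finset in
private lemma sum_zero {n : ℕ} (hn : 1 ≤ n) :
    ∑ S ∈ (Finset.univ : Finset (Fin n)).powerset,
      (-1 : ℤ) ^ (S.card + 1) *
        (Nat.card {G : Fin n → Fin n → Bool //
          ((∀ i, G i i = false) ∧ IsAcyclicDigraph G) ∧ ∀ i j, j ∈ S → G i j = false} : ℤ)
      = 0 := by
  classical
  have hcard : ∀ S : Finset (Fin n),
      (Nat.card {G : Fin n → Fin n → Bool //
        ((∀ i, G i i = false) ∧ IsAcyclicDigraph G) ∧ ∀ i j, j ∈ S → G i j = false} : ℤ) =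
      ∑ G : Fin n → Fin n → Bool,
        (if ((∀ i, G i i = false) ∧ IsAcyclicDigraph G) ∧ ∀ i j, j ∈ S → G i j = false
          then (1 : ℤ) else 0) := by
    intro S
    rw [Nat.card_eq_fintype_card, Fintype.card_subtype, Finset.sum_boole]
  calc ∑ S ∈ (Finset.univ : Finset (Fin n)).powerset,
      (-1 : ℤ) ^ (S.card + 1) *
        (Nat.card {G : Fin n → Fin n → Bool //
          ((∀ i, G i i = false) ∧ IsAcyclicDigraph G) ∧ ∀ i j, j ∈ S → G i j = false} : ℤ)
      = ∑ S ∈ (Finset.univ : Finset (Fin n)).powerset, ∑ G : Fin n → Fin n → Bool,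
          (if ((∀ i, G i i = false) ∧ IsAcyclicDigraph G) ∧ ∀ i j, j ∈ S → G i j = false
            then (-1 : ℤ) ^ (S.card + 1) else 0) := by
        refine Finset.sum_congr rfl fun S _ => ?_
        rw [hcard S, Finset.mul_sum]
        exact Finset.sum_congr rfl fun G _ => by rw [mul_ite, mul_one, mul_zero]
    _ = ∑ G : Fin n → Fin n → Bool, ∑ S ∈ (Finset.univ : Finset (Fin n)).powerset,
          (if ((∀ i, G i i = false) ∧ IsAcyclicDigraph G) ∧ ∀ i j, j ∈ S → G i j = false
            then (-1 : ℤ) ^ (S.card + 1) else 0) := Finset.sum_comm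
    _ = 0 := by
        refine Finset.sum_eq_zero fun G _ => ?_
        by_cases hG : (∀ i, G i i = false) ∧ IsAcyclicDigraph G
        · set T : Finset (Fin n) := Finset.univ.filter (fun j => ∀ i, G i j = false) with hT
          have hiff : ∀ S : Finset (Fin n),
              (((∀ i, G i i = false) ∧ IsAcyclicDigraph G) ∧ ∀ i j, j ∈ S → G i j = false) ↔
                S ⊆ T := by
            intro S
            constructor
            · intro h x hx
              simp only [hT, Finset.mem_filter, Finset.mem_univ, true_and]
              exact fun i => h.2 i x hx
            · intro h
              exact ⟨hG, fun i j hj => (Finset.mem_filter.mp (h hj)).2 i⟩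
          simp only [hiff]
          rw [← Finset.sum_filter]
          have hfil : (Finset.univ : Finset (Fin n)).powerset.filter (· ⊆ T) = T.powerset := by
            ext S
            simp [Finset.mem_powerset]
          rw [hfil]
          have hTne : T.Nonempty := by
            obtain ⟨j, hj⟩ := exists_source_s7 hn G hG.2
            exact ⟨j, by simp [hT, hj]⟩
          have := Finset.sum_powerset_neg_one_pow_card_of_nonempty hTne
          calc ∑ S ∈ T.powerset, (-1 : ℤ) ^ (S.card + 1)
              = ∑ S ∈ T.powerset, (-1 : ℤ) ^ S.card * (-1) := by
                refine Finset.sum_congr rfl fun S _ => ?_; rw [pow_succ]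
            _ = (∑ S ∈ T.powerset, (-1 : ℤ) ^ S.card) * (-1) := by rw [← Finset.sum_mul]
            _ = 0 := by rw [this, zero_mul]
        · refine Finset.sum_eq_zero fun S _ => ?_
          rw [if_neg (fun h => hG h.1)]

theorem stmt_7 (n : ℕ) (hn : 1 ≤ n) :
    (numAcyclic n : ℤ) =
      ∑ k ∈ Finset.Icc 1 n,
        (-1 : ℤ) ^ (k + 1) * (n.choose k) * 2 ^ (k * (n - k)) * numAcyclic (n - k) := by
  classical
  set g : ℕ → ℤ := fun k => (-1 : ℤ) ^ (k + 1) * (2 ^ (k * (n - k)) * (numAcyclic (n - k) : ℤ))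
    with hg
  have h0 : ∑ S ∈ (Finset.univ : Finset (Fin n)).powerset, g S.card = 0 := by
    rw [← sum_zero (n := n) hn]
    refine Finset.sum_congr rfl fun S _ => ?_
    rw [card_sources S, hg]
    push_cast
    ring
  rw [Finset.sum_powerset] at h0
  have h1 : ∀ j ∈ Finset.range ((Finset.univ : Finset (Fin n)).card + 1),
      ∑ S ∈ Finset.powersetCard j (Finset.univ : Finset (Fin n)), g S.card
        = (n.choose j) • g j := by
    intro j _
    rw [Finset.sum_powersetCard]
    simp
  rw [Finset.sum_congr rfl h1] at h0
  have hcu : (Finset.univ : Finset (Fin n)).card = n := by simp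
  rw [hcu] at h0
  have hins : Finset.range (n + 1) = insert 0 (Finset.Icc 1 n) := by
    ext k
    simp only [Finset.mem_range, Finset.mem_insert, Finset.mem_Icc]
    omega
  rw [hins, Finset.sum_insert (by simp)] at h0
  have h2 : (n.choose 0) • g 0 = -(numAcyclic n : ℤ) := by
    simp [hg]
  rw [h2] at h0
  have h3 : ∑ k ∈ Finset.Icc 1 n,
      (-1 : ℤ) ^ (k + 1) * (n.choose k) * 2 ^ (k * (n - k)) * numAcyclic (n - k)
      = ∑ k ∈ Finset.Icc 1 n, (n.choose k) • g k := by
    refine Finset.sum_congr rfl fun k _ => ?_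
    rw [hg, nsmul_eq_mul]
    push_cast
    ring
  rw [h3]
  linarith
end
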